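/- arXiv:2403.17663 — 3 statements merged into one kernel-verified Lean document; each statement's English description precedes it below -/
import Mathlib

section
/- There exists M such that for every x ∈ ℤ² with |x| ≥ M and every killing rate κ > 0, Σ_{n=⌊|x|²/(2 log |x|)⌋+1}^{|x|²} (4+κ)^{−n} W_n^{o,x} ≤ 2·(1 − κ/(4+κ))^{|x|²/(2 log |x|)}. -/
open scoped Real

/-- Graph (L¹) distance of `x ∈ ℤ²` from the origin: `|x₁| + |x₂|`. -/
def gnorm (x : ℤ × ℤ) : ℕ := x.1.natAbs + x.2.natAbs

/-- `W n x` is the number of nearest-neighbour walks of length `n` in `ℤ²`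
from the origin `o = (0,0)` to `x`, i.e. the number of sequences
`(v₀, …, v_n)` with `v₀ = o`, `v_n = x` and `|v_{i+1} − v_i| = 1` for all `i`. -/
noncomputable def W (n : ℕ) (x : ℤ × ℤ) : ℕ :=
  Set.ncard {v : Fin (n + 1) → ℤ × ℤ |
    v 0 = (0, 0) ∧ v (Fin.last n) = x ∧
    ∀ i : Fin n, gnorm (v i.succ - v i.castSucc) = 1}

/-- The Green's function `G^{o,x}` of the simple random walk on `ℤ²` with
killing rate `κ`: `G κ x = Σ_{n≥0} (4+κ)^{-n} W_n^{o,x}`. -/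
noncomputable def G (κ : ℝ) (x : ℤ × ℤ) : ℝ :=
  ∑' n : ℕ, (1 / (4 + κ)) ^ n * (W n x : ℝ)

set_option maxHeartbeats 1000000


lemma tele {M : Type*} [AddCommGroup M] :
    ∀ (n : ℕ) (v : Fin (n + 1) → M),
      ∑ i : Fin n, (v i.succ - v i.castSucc) = v (Fin.last n) - v 0 := by
  intro n
  induction n with
  | zero => intro v; simp [Fin.last]
  | succ n ih =>
    intro v
    rw [Fin.sum_univ_castSucc]
    have h := ih (fun i => v i.castSucc)
    simp only [Fin.castSucc_zero] at h
    have e1 : ∀ i : Fin n, (i.succ).castSucc = (i.castSucc).succ := by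
      intro i; ext; simp
    calc ∑ i : Fin n, (v (i.castSucc).succ - v (i.castSucc).castSucc)
          + (v (Fin.last n).succ - v (Fin.last n).castSucc)
        = (v ((Fin.last n).castSucc) - v 0) + (v (Fin.last n).succ - v (Fin.last n).castSucc) := by
          have : ∑ i : Fin n, (v (i.castSucc).succ - v (i.castSucc).castSucc)
              = v ((Fin.last n).castSucc) - v 0 := by
            rw [← h]
            exact Finset.sum_congr rfl (fun i _ => by rw [e1 i])
          rw [this]
      _ = v (Fin.last (n+1)) - v 0 := by rw [Fin.succ_last]; abel
  
lemma count_pm (n : ℕ) (f : Fin n → ℤ) (h : ∀ i, f i = 1 ∨ f i = -1) :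
    ∑ i, f i = 2 * ((Finset.univ.filter (fun i => 0 < f i)).card : ℤ) - n := by
  classical
  have h1 : ∑ i ∈ Finset.univ.filter (fun i => 0 < f i), f i
      = ((Finset.univ.filter (fun i => 0 < f i)).card : ℤ) := by
    rw [Finset.sum_congr rfl (fun i hi => ?_), Finset.sum_const, nsmul_eq_mul, mul_one]
    rcases h i with h' | h' <;> simp [Finset.mem_filter] at hi <;> omega
  have h2 : ∑ i ∈ Finset.univ.filter (fun i => ¬ 0 < f i), f i
      = -((Finset.univ.filter (fun i => ¬ 0 < f i)).card : ℤ) := by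
    rw [Finset.sum_congr rfl (fun i hi => ?_), Finset.sum_const, nsmul_eq_mul, mul_neg_one]
    rcases h i with h' | h' <;> simp [Finset.mem_filter] at hi <;> omega
  have h3 := Finset.sum_filter_add_sum_filter_not Finset.univ (fun i => 0 < f i) f
  have h4 := Finset.card_filter_add_card_filter_not (s := (Finset.univ : Finset (Fin n)))
      (fun i => 0 < f i)
  rw [h1, h2] at h3
  rw [← h3]
  simp only [Finset.card_univ, Fintype.card_fin] at h4
  have : ((Finset.univ.filter (fun i => ¬ 0 < f i)).card : ℤ)
      = n - ((Finset.univ.filter (fun i => 0 < f i)).card : ℤ) := by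
    have := h4
    push_cast [← this]
    ring
  rw [this]; ring

lemma step_class (e : ℤ × ℤ) (h : gnorm e = 1) :
    e = (1,0) ∨ e = (-1,0) ∨ e = (0,1) ∨ e = (0,-1) := by
  obtain ⟨a, b⟩ := e
  simp only [gnorm] at h
  simp only [Prod.mk.injEq]
  omega

lemma step_pm (e : ℤ × ℤ) (h : gnorm e = 1) :
    (e.1 + e.2 = 1 ∨ e.1 + e.2 = -1) ∧ (e.1 - e.2 = 1 ∨ e.1 - e.2 = -1) := by
  rcases step_class e h with h | h | h | h <;> subst h <;> simp

lemma step_inj (e e' : ℤ × ℤ) (h : gnorm e = 1) (h' : gnorm e' = 1)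
    (h1 : 0 < e.1 + e.2 ↔ 0 < e'.1 + e'.2) (h2 : 0 < e.1 - e.2 ↔ 0 < e'.1 - e'.2) :
    e = e' := by
  rcases step_class e h with rfl | rfl | rfl | rfl <;>
    rcases step_class e' h' with rfl | rfl | rfl | rfl <;> simp_all


-- central binomial: (centralBinom m)^2 * (3m+1) ≤ 16^m
lemma cb_sq : ∀ m : ℕ, (Nat.centralBinom m)^2 * (3*m+1) ≤ 16^m := by
  intro m
  induction m with
  | zero => simp [Nat.centralBinom]
  | succ m ih =>
    have key := Nat.succ_mul_centralBinom_succ m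
    -- (m+1) * CB(m+1) = 2(2m+1) CB m
    have h1 : (m+1)^2 * ((Nat.centralBinom (m+1))^2 * (3*(m+1)+1))
        = 4*(2*m+1)^2*(3*m+4) * (Nat.centralBinom m)^2 := by
      have : ((m+1) * Nat.centralBinom (m+1))^2 = (2*(2*m+1)*Nat.centralBinom m)^2 := by
        rw [key]
      ring_nf
      ring_nf at this
      nlinarith [this]
    have h2 : 4*(2*m+1)^2*(3*m+4) * ((Nat.centralBinom m)^2 * (3*m+1))
        ≤ 4*(2*m+1)^2*(3*m+4) * 16^m := Nat.mul_le_mul_left _ ih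
    have h3 : 4*(2*m+1)^2*(3*m+4) ≤ 16*(m+1)^2*(3*m+1) := by nlinarith
    have h4 : (m+1)^2 * ((Nat.centralBinom (m+1))^2 * (3*(m+1)+1)) * (3*m+1)
        ≤ (m+1)^2 * 16^(m+1) * (3*m+1) := by
      calc (m+1)^2 * ((Nat.centralBinom (m+1))^2 * (3*(m+1)+1)) * (3*m+1)
          = (4*(2*m+1)^2*(3*m+4) * (Nat.centralBinom m)^2) * (3*m+1) := by rw [h1]
        _ = 4*(2*m+1)^2*(3*m+4) * ((Nat.centralBinom m)^2 * (3*m+1)) := by ring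
        _ ≤ 4*(2*m+1)^2*(3*m+4) * 16^m := h2
        _ ≤ (16*(m+1)^2*(3*m+1)) * 16^m := Nat.mul_le_mul_right _ h3
        _ = (m+1)^2 * 16^(m+1) * (3*m+1) := by ring
    have hpos : 0 < (m+1)^2 * (3*m+1) := by positivity
    nlinarith [h4]

-- middle binomial squared bound, real version
lemma middle_sq (n : ℕ) (hn : 67 ≤ n) :
    ((n.choose (n/2) : ℝ))^2 * n ≤ (67/100) * 4^n := by
  rcases Nat.even_or_odd n with ⟨m, hm⟩ | ⟨m, hm⟩
  · -- n = 2m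
    have hnm : n = 2*m := by omega
    subst hnm
    have h := cb_sq m
    have hc : (2*m).choose (2*m/2) = Nat.centralBinom m := by
      rw [Nat.centralBinom]; congr 1; omega
    rw [hc]
    have h' : ((Nat.centralBinom m : ℝ))^2 * (3*m+1) ≤ 16^m := by
      have := h
      have : ((Nat.centralBinom m ^2 * (3*m+1) : ℕ) : ℝ) ≤ ((16^m : ℕ) : ℝ) := by
        exact_mod_cast this
      push_cast at this
      linarith
    have h16 : (16:ℝ)^m = 4^(2*m) := by
      rw [pow_mul]; norm_num
    have hm1 : (0:ℝ) < 3*m+1 := by positivity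
    have hle : ((2*m : ℕ):ℝ) ≤ (67/100) * (3*(m:ℝ)+1) := by
      push_cast
      nlinarith [Nat.one_le_iff_ne_zero.mpr (by omega : m ≠ 0), (by exact_mod_cast (by omega : 1 ≤ m) : (1:ℝ) ≤ m)]
    calc ((Nat.centralBinom m : ℝ))^2 * ((2*m:ℕ):ℝ)
        ≤ ((Nat.centralBinom m : ℝ))^2 * ((67/100) * (3*(m:ℝ)+1)) := by
          apply mul_le_mul_of_nonneg_left hle (by positivity)
      _ = (67/100) * (((Nat.centralBinom m : ℝ))^2 * (3*(m:ℝ)+1)) := by ring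
      _ ≤ (67/100) * 16^m := by linarith
      _ = (67/100) * 4^(2*m) := by rw [h16]
  · -- n = 2m+1
    have hnm : n = 2*m+1 := by omega
    subst hnm
    have hmid : (2*m+1)/2 = m := by omega
    rw [hmid]
    -- choose (2m+1) m ≤ 2 * centralBinom m
    have hsplit : (2*m+1).choose (m+1) = (2*m).choose m + (2*m).choose (m+1) :=
      Nat.choose_succ_succ (2*m) m
    have hsymm : (2*m+1).choose m = (2*m+1).choose (m+1) := by
      rw [← Nat.choose_symm (by omega : m+1 ≤ 2*m+1)]
      congr 1; omega
    have hle2 : (2*m).choose (m+1) ≤ (2*m).choose m := by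
      have := Nat.choose_le_middle (m+1) (2*m)
      rwa [(by omega : 2*m/2 = m)] at this
    have hcb : (2*m).choose m = Nat.centralBinom m := rfl
    have hch : (2*m+1).choose m ≤ 2 * Nat.centralBinom m := by
      rw [hsymm, hsplit]; omega
    have h := cb_sq m
    have h' : ((Nat.centralBinom m : ℝ))^2 * (3*(m:ℝ)+1) ≤ 16^m := by
      have : ((Nat.centralBinom m ^2 * (3*m+1) : ℕ) : ℝ) ≤ ((16^m : ℕ) : ℝ) := by
        exact_mod_cast h
      push_cast at this
      linarith
    have hchR : ((2*m+1).choose m : ℝ) ≤ 2 * Nat.centralBinom m := by exact_mod_cast hch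
    have h4 : (4:ℝ)*16^m = 4^(2*m+1) := by
      rw [pow_succ, pow_mul]; ring_nf
    have hm33 : (33:ℝ) ≤ (m:ℝ) := by exact_mod_cast (by omega : 33 ≤ m)
    have hle : ((2*m+1 : ℕ):ℝ) ≤ (67/100) * (3*(m:ℝ)+1) := by
      push_cast
      linarith
    have hnn : (0:ℝ) ≤ ((2*m+1).choose m : ℝ) := by positivity
    calc (((2*m+1).choose m : ℝ))^2 * ((2*m+1:ℕ):ℝ)
        ≤ (2 * (Nat.centralBinom m:ℝ))^2 * ((67/100) * (3*(m:ℝ)+1)) := by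
          apply mul_le_mul (by nlinarith) hle (by positivity) (by positivity)
      _ = (67/100) * (4 * (((Nat.centralBinom m : ℝ))^2 * (3*(m:ℝ)+1))) := by ring
      _ ≤ (67/100) * (4 * 16^m) := by nlinarith
      _ = (67/100) * 4^(2*m+1) := by rw [h4]


-- ratio bound: for k₀ = (n+1)/2, choose n (k₀+j) ≤ choose n k₀ * exp(-j²/n)
lemma choose_ratio (n : ℕ) (hn : 1 ≤ n) :
    ∀ j : ℕ, (n.choose ((n+1)/2 + j) : ℝ) ≤ (n.choose ((n+1)/2) : ℝ) * Real.exp (-(j:ℝ)^2/n) := by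
  set k0 := (n+1)/2 with hk0
  have hk0n : n ≤ 2 * k0 := by omega
  have hk0n' : 2 * k0 ≤ n + 1 := by omega
  intro j
  induction j with
  | zero => simp
  | succ j ih =>
    by_cases hbig : n ≤ k0 + j
    · have : n.choose (k0 + (j+1)) = 0 := Nat.choose_eq_zero_of_lt (by omega)
      rw [(by ring_nf : k0 + (j+1) = k0 + j + 1)] at this ⊢
      rw [this]
      push_cast
      positivity
    · push_neg at hbig
      -- choose n (k0+j+1) * (k0+j+1) = choose n (k0+j) * (n - (k0+j))
      have key := Nat.choose_succ_right_eq n (k0 + j)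
      have hcast : (n.choose (k0+j+1) : ℝ) * (k0+j+1) = (n.choose (k0+j) : ℝ) * ((n:ℝ) - (k0+j)) := by
        have : ((n.choose (k0+j+1) * (k0+j+1) : ℕ) : ℝ) = ((n.choose (k0+j) * (n - (k0+j)) : ℕ) : ℝ) := by
          exact_mod_cast congrArg (Nat.cast : ℕ → ℝ) key
        push_cast [Nat.cast_sub (le_of_lt hbig)] at this
        linarith
    -- target step ineq: (n - k0 - j) ≤ (k0+j+1) * (1 - (2j+1)/n)
      have hnR : (0:ℝ) < n := by exact_mod_cast hn
      have hstep : ((n:ℝ) - (k0+j)) ≤ ((k0:ℝ)+j+1) * (1 - (2*j+1)/n) := by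
        rw [← sub_nonneg]
        have expand : ((k0:ℝ)+j+1) * (1 - (2*(j:ℝ)+1)/n) - ((n:ℝ) - (k0+j))
            = (((k0:ℝ)+j+1) * ((n:ℝ) - (2*j+1)) - ((n:ℝ) - (k0+j)) * n) / n := by
          field_simp
        rw [expand]
        apply div_nonneg _ (le_of_lt hnR)
        -- integer inequality: (k0+j+1)(n-2j-1) - (n-k0-j)*n ≥ 0, given n ≤ 2k0 ≤ n+1, k0+j < n
        have hk0R : (n:ℝ) ≤ 2*(k0:ℝ) := by exact_mod_cast hk0n
        have hk0R' : 2*(k0:ℝ) ≤ (n:ℝ)+1 := by exact_mod_cast hk0n'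
        have hbigR : (k0:ℝ) + j + 1 ≤ n := by exact_mod_cast hbig
        nlinarith [sq_nonneg ((j:ℝ)), sq_nonneg ((k0:ℝ)+j+1-(n:ℝ))]
      have hexp1 : (1 - (2*(j:ℝ)+1)/n) ≤ Real.exp (-(2*(j:ℝ)+1)/n) := by
        have := Real.add_one_le_exp (-(2*(j:ℝ)+1)/n)
        have e : -(2*(j:ℝ)+1)/n + 1 = 1 - (2*(j:ℝ)+1)/n := by ring
        linarith [this, e ▸ this]
      have hpos : (0:ℝ) < (k0:ℝ)+j+1 := by positivity
      have hchpos : (0:ℝ) ≤ (n.choose (k0+j) : ℝ) := by positivity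
      have h1 : (n.choose (k0+j+1) : ℝ)
          = (n.choose (k0+j) : ℝ) * ((n:ℝ) - (k0+j)) / ((k0:ℝ)+j+1) := by
        field_simp at hcast ⊢
        linarith [hcast]
      have h2 : (n.choose (k0+j+1) : ℝ)
          ≤ (n.choose (k0+j) : ℝ) * Real.exp (-(2*(j:ℝ)+1)/n) := by
        rw [h1, div_le_iff₀ hpos]
        calc (n.choose (k0+j) : ℝ) * ((n:ℝ) - (k0+j))
            ≤ (n.choose (k0+j) : ℝ) * (((k0:ℝ)+j+1) * (1 - (2*j+1)/n)) :=
              mul_le_mul_of_nonneg_left hstep hchpos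
          _ ≤ (n.choose (k0+j) : ℝ) * (((k0:ℝ)+j+1) * Real.exp (-(2*(j:ℝ)+1)/n)) := by
              apply mul_le_mul_of_nonneg_left _ hchpos
              exact mul_le_mul_of_nonneg_left hexp1 (le_of_lt hpos)
          _ = (n.choose (k0+j) : ℝ) * Real.exp (-(2*(j:ℝ)+1)/n) * ((k0:ℝ)+j+1) := by ring
      have h3 : (n.choose (k0+j) : ℝ) * Real.exp (-(2*(j:ℝ)+1)/n)
          ≤ (n.choose k0 : ℝ) * Real.exp (-(j:ℝ)^2/n) * Real.exp (-(2*(j:ℝ)+1)/n) := by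
        apply mul_le_mul_of_nonneg_right ih (le_of_lt (Real.exp_pos _))
      have h4 : Real.exp (-(j:ℝ)^2/n) * Real.exp (-(2*(j:ℝ)+1)/n)
          = Real.exp (-((j:ℝ)+1)^2/n) := by
        rw [← Real.exp_add]
        congr 1
        field_simp
        ring
      calc (n.choose (k0+(j+1)) : ℝ) = (n.choose (k0+j+1) : ℝ) := by rw [(by ring_nf : k0+(j+1) = k0+j+1)]
        _ ≤ (n.choose (k0+j) : ℝ) * Real.exp (-(2*(j:ℝ)+1)/n) := h2
        _ ≤ (n.choose k0 : ℝ) * Real.exp (-(j:ℝ)^2/n) * Real.exp (-(2*(j:ℝ)+1)/n) := h3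
        _ = (n.choose k0 : ℝ) * Real.exp (-((j:ℝ)+1)^2/n) := by rw [mul_assoc, h4]
        _ = (n.choose k0 : ℝ) * Real.exp (-(((j+1 : ℕ)):ℝ)^2/n) := by push_cast; ring_nf

lemma choose_exp (n g k : ℕ) (hn : 1 ≤ n) (hg : 1 ≤ g) (h : 2*k = n + g) :
    (n.choose k : ℝ) ≤ (n.choose (n/2) : ℝ) * Real.exp (-((g:ℝ)-1)^2/(4*n)) := by
  set k0 := (n+1)/2 with hk0
  have hkk0 : k0 ≤ k := by omega
  set j := k - k0 with hj
  have hkj : k = k0 + j := by omega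
  have h1 : (n.choose k : ℝ) ≤ (n.choose k0 : ℝ) * Real.exp (-(j:ℝ)^2/n) := by
    rw [hkj]; exact choose_ratio n hn j
  have hsym : n.choose k0 = n.choose (n/2) := by
    rw [← Nat.choose_symm (by omega : n/2 ≤ n)]
    congr 1
    omega
  have h2j : g ≤ 2*j + 1 := by omega
  have hgR : ((g:ℝ)-1) ≤ 2*(j:ℝ) := by
    have : ((g:ℕ):ℝ) ≤ ((2*j+1 : ℕ):ℝ) := by exact_mod_cast h2j
    push_cast at this
    linarith
  have hgnn : (0:ℝ) ≤ (g:ℝ)-1 := by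
    have : ((1:ℕ):ℝ) ≤ ((g:ℕ):ℝ) := by exact_mod_cast hg
    push_cast at this; linarith
  have hnR : (0:ℝ) < n := by exact_mod_cast hn
  have hexp : Real.exp (-(j:ℝ)^2/n) ≤ Real.exp (-((g:ℝ)-1)^2/(4*n)) := by
    apply Real.exp_le_exp.mpr
    rw [div_le_div_iff₀ (by positivity) (by positivity)]
    nlinarith [mul_le_mul hgR hgR hgnn (by positivity : (0:ℝ) ≤ 2*(j:ℝ)), hnR, mul_le_mul_of_nonneg_right (mul_le_mul hgR hgR hgnn (by positivity : (0:ℝ) ≤ 2*(j:ℝ))) (le_of_lt hnR)]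
  calc (n.choose k : ℝ) ≤ (n.choose k0 : ℝ) * Real.exp (-(j:ℝ)^2/n) := h1
    _ ≤ (n.choose k0 : ℝ) * Real.exp (-((g:ℝ)-1)^2/(4*n)) := by
        apply mul_le_mul_of_nonneg_left hexp (by positivity)
    _ = (n.choose (n/2) : ℝ) * Real.exp (-((g:ℝ)-1)^2/(4*n)) := by rw [hsym]

lemma choose_exp_int (n : ℕ) (w : ℤ) (j : ℕ) (hn : 1 ≤ n) (hj : 2*(j:ℤ) = (n:ℤ) + w)
    (hw : 1 ≤ w.natAbs) :
    (n.choose j : ℝ) ≤ (n.choose (n/2) : ℝ) * Real.exp (-((w.natAbs:ℝ)-1)^2/(4*n)) := by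
  rcases le_or_gt 0 w with hpos | hneg
  · have h : 2*j = n + w.natAbs := by omega
    exact choose_exp n w.natAbs j hn hw h
  · by_cases hjn : j ≤ n
    · have hsym : n.choose j = n.choose (n - j) := (Nat.choose_symm hjn).symm
      have h : 2*(n-j) = n + w.natAbs := by omega
      rw [hsym]
      exact choose_exp n w.natAbs (n-j) hn hw h
    · rw [Nat.choose_eq_zero_of_lt (by omega)]
      push_cast
      positivity


-- y √y e^{-y} ≤ 0.42 for y > 0
lemma exp_poly_bound (y : ℝ) (hy : 0 < y) :
    y * Real.sqrt y * Real.exp (-y) ≤ 42/100 := by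
  have h1 : y ≤ (3/2) * Real.exp (2*y/3 - 1) := by
    have := Real.add_one_le_exp (2*y/3 - 1)
    nlinarith [Real.exp_pos (2*y/3 - 1)]
  have hy3 : (0:ℝ) ≤ y := le_of_lt hy
  have hcube : y^3 ≤ (27/8) * Real.exp (2*y - 3) := by
    have h2 : y^3 ≤ ((3/2) * Real.exp (2*y/3 - 1))^3 := by
      apply pow_le_pow_left₀ hy3 h1
    calc y^3 ≤ ((3/2) * Real.exp (2*y/3 - 1))^3 := h2
      _ = (27/8) * (Real.exp (2*y/3 - 1))^3 := by ring
      _ = (27/8) * Real.exp (2*y - 3) := by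
          rw [← Real.exp_nat_mul]
          norm_num
          ring_nf
  have he3 : (20:ℝ) ≤ Real.exp 3 := by
    have h := Real.exp_one_gt_d9
    have : Real.exp 3 = (Real.exp 1)^3 := by
      rw [← Real.exp_nat_mul]; norm_num
    rw [this]
    have h20 : (20:ℝ) ≤ (2.7182818283:ℝ)^3 := by norm_num
    have := pow_lt_pow_left₀ h (by norm_num : (0:ℝ) ≤ 2.7182818283) (by norm_num : 3 ≠ 0)
    linarith
  have hexpsq : (Real.exp (-y))^2 = Real.exp (-2*y) := by
    rw [sq, ← Real.exp_add]; ring_nf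
  have hsq : (y * Real.sqrt y * Real.exp (-y))^2 = y^3 * Real.exp (-2*y) := by
    rw [mul_pow, mul_pow, Real.sq_sqrt hy3, hexpsq]
    ring
  have hkey : y^3 * Real.exp (-2*y) ≤ 27/(8 * Real.exp 3) := by
    have hexp3 : Real.exp (2*y-3) * Real.exp (-2*y) = Real.exp (-3) := by
      rw [← Real.exp_add]; ring_nf
    calc y^3 * Real.exp (-2*y) ≤ (27/8) * Real.exp (2*y-3) * Real.exp (-2*y) := by
          apply mul_le_mul_of_nonneg_right hcube (le_of_lt (Real.exp_pos _))
      _ = (27/8) * Real.exp (-3) := by rw [mul_assoc, hexp3]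
      _ = 27/(8 * Real.exp 3) := by rw [Real.exp_neg]; field_simp
  have h42 : 27/(8 * Real.exp 3) ≤ (42/100)^2 := by
    rw [div_le_iff₀ (by positivity)]
    nlinarith [he3]
  have hnn : 0 ≤ y * Real.sqrt y * Real.exp (-y) := by positivity
  nlinarith [hsq, hkey, h42]

-- exp(-c/n) ≤ 0.42 * n√n / (c√c)
lemma exp_div_bound (c : ℝ) (hc : 0 < c) (n : ℝ) (hn : 0 < n) :
    Real.exp (-(c/n)) ≤ (42/100) * (n * Real.sqrt n) / (c * Real.sqrt c) := by
  have key := exp_poly_bound (c/n) (by positivity)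
  have hs : Real.sqrt (c/n) = Real.sqrt c / Real.sqrt n := Real.sqrt_div hc.le n
  have h1 : (c/n) * (Real.sqrt c / Real.sqrt n) * Real.exp (-(c/n)) ≤ 42/100 := by
    rw [← hs]; exact key
  have hsn : 0 < Real.sqrt n := Real.sqrt_pos.mpr hn
  have hsc : 0 < Real.sqrt c := Real.sqrt_pos.mpr hc
  rw [← sub_nonneg]
  have h1' : 0 ≤ 42/100 - (c/n) * (Real.sqrt c / Real.sqrt n) * Real.exp (-(c/n)) := by linarith
  have expand : (42/100) * (n * Real.sqrt n) / (c * Real.sqrt c) - Real.exp (-(c/n))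
      = ((42/100) - (c/n) * (Real.sqrt c / Real.sqrt n) * Real.exp (-(c/n)))
        * ((n * Real.sqrt n) / (c * Real.sqrt c)) := by
    field_simp
  rw [expand]
  apply mul_nonneg h1' (by positivity)

-- sum of sqrt
lemma sum_sqrt_le (N : ℕ) :
    ∑ n ∈ Finset.Icc 1 N, Real.sqrt n ≤ (2/3) * ((N:ℝ)+1) * Real.sqrt ((N:ℝ)+1) := by
  induction N with
  | zero => simp; positivity
  | succ N ih =>
    rw [Finset.sum_Icc_succ_top (by omega)]
    have key : Real.sqrt ((N:ℝ)+1) + (2/3) * ((N:ℝ)+1) * Real.sqrt ((N:ℝ)+1)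
        ≤ (2/3) * ((N:ℝ)+2) * Real.sqrt ((N:ℝ)+2) := by
      have h1 : (0:ℝ) ≤ (N:ℝ)+1 := by positivity
      have h2 : (0:ℝ) ≤ (N:ℝ)+2 := by positivity
      set a := Real.sqrt ((N:ℝ)+1) with ha
      set b := Real.sqrt ((N:ℝ)+2) with hb
      have ha2 : a^2 = (N:ℝ)+1 := Real.sq_sqrt h1
      have hb2 : b^2 = (N:ℝ)+2 := Real.sq_sqrt h2
      have hann : 0 ≤ a := Real.sqrt_nonneg _
      have hbnn : 0 ≤ b := Real.sqrt_nonneg _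
      -- (2N+5) a ≤ 2(N+2) b  ⟸  (2N+5)² (N+1) ≤ 4(N+2)³
      have hgoal : (2*(N:ℝ)+5) * a ≤ 2*((N:ℝ)+2) * b := by
        have hsq : ((2*(N:ℝ)+5) * a)^2 ≤ (2*((N:ℝ)+2) * b)^2 := by
          rw [mul_pow, mul_pow, ha2, hb2]
          nlinarith [sq_nonneg ((N:ℝ))]
        have hl : 0 ≤ (2*(N:ℝ)+5) * a := by positivity
        have hr : 0 ≤ 2*((N:ℝ)+2) * b := by positivity
        nlinarith [hsq, hl, hr]
      linarith
    have hcast : ((N+1 : ℕ):ℝ) = (N:ℝ)+1 := by push_cast; ring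
    calc ∑ n ∈ Finset.Icc 1 N, Real.sqrt n + Real.sqrt ((N+1 : ℕ):ℝ)
        ≤ (2/3) * ((N:ℝ)+1) * Real.sqrt ((N:ℝ)+1) + Real.sqrt ((N:ℝ)+1) := by
          rw [hcast]; linarith
      _ ≤ (2/3) * ((N:ℝ)+2) * Real.sqrt ((N:ℝ)+2) := by linarith
      _ = (2/3) * (((N+1:ℕ):ℝ)+1) * Real.sqrt (((N+1:ℕ):ℝ)+1) := by push_cast; ring_nf

section walkcount

variable (n : ℕ) (x : ℤ × ℤ)

private noncomputable def S : Set (Fin (n+1) → ℤ × ℤ) :=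
  {v | v 0 = (0, 0) ∧ v (Fin.last n) = x ∧
    ∀ i : Fin n, gnorm (v i.succ - v i.castSucc) = 1}

private noncomputable def fmap : (Fin (n+1) → ℤ × ℤ) → Finset (Fin n) × Finset (Fin n) :=
  fun v => (Finset.univ.filter (fun i => 0 < (v i.succ - v i.castSucc).1 + (v i.succ - v i.castSucc).2),
            Finset.univ.filter (fun i => 0 < (v i.succ - v i.castSucc).1 - (v i.succ - v i.castSucc).2))

lemma walk_sum {v : Fin (n+1) → ℤ × ℤ} (hv : v ∈ S n x) :
    ∑ i : Fin n, (v i.succ - v i.castSucc) = x := by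
  rw [tele n v, hv.2.1, hv.1]
  simp

lemma walk_card1 {v : Fin (n+1) → ℤ × ℤ} (hv : v ∈ S n x) :
    2 * (((Finset.univ.filter (fun i : Fin n => 0 < (v i.succ - v i.castSucc).1 + (v i.succ - v i.castSucc).2)).card : ℤ))
      = n + (x.1 + x.2) := by
  have hs := walk_sum n x hv
  have h1 : ∑ i : Fin n, ((v i.succ - v i.castSucc).1 + (v i.succ - v i.castSucc).2) = x.1 + x.2 := by
    rw [Finset.sum_add_distrib, ← Prod.fst_sum, ← Prod.snd_sum, hs]
  have h2 := count_pm n (fun i => (v i.succ - v i.castSucc).1 + (v i.succ - v i.castSucc).2)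
    (fun i => (step_pm _ (hv.2.2 i)).1)
  beta_reduce at h2
  rw [h1] at h2
  omega

lemma walk_card2 {v : Fin (n+1) → ℤ × ℤ} (hv : v ∈ S n x) :
    2 * (((Finset.univ.filter (fun i : Fin n => 0 < (v i.succ - v i.castSucc).1 - (v i.succ - v i.castSucc).2)).card : ℤ))
      = n + (x.1 - x.2) := by
  have hs := walk_sum n x hv
  have h1 : ∑ i : Fin n, ((v i.succ - v i.castSucc).1 - (v i.succ - v i.castSucc).2) = x.1 - x.2 := by
    rw [Finset.sum_sub_distrib, ← Prod.fst_sum, ← Prod.snd_sum, hs]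
  have h2 := count_pm n (fun i => (v i.succ - v i.castSucc).1 - (v i.succ - v i.castSucc).2)
    (fun i => (step_pm _ (hv.2.2 i)).2)
  beta_reduce at h2
  rw [h1] at h2
  omega

lemma walk_inj : Set.InjOn (fmap n) (S n x) := by
  intro v hv w hw hfvw
  have h1 : ∀ i : Fin n,
      (0 < (v i.succ - v i.castSucc).1 + (v i.succ - v i.castSucc).2 ↔
       0 < (w i.succ - w i.castSucc).1 + (w i.succ - w i.castSucc).2) := by
    intro i
    have := congrArg Prod.fst hfvw
    simp only [fmap] at this
    rw [Finset.ext_iff] at this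
    have := this i
    simpa using this
  have h2 : ∀ i : Fin n,
      (0 < (v i.succ - v i.castSucc).1 - (v i.succ - v i.castSucc).2 ↔
       0 < (w i.succ - w i.castSucc).1 - (w i.succ - w i.castSucc).2) := by
    intro i
    have := congrArg Prod.snd hfvw
    simp only [fmap] at this
    rw [Finset.ext_iff] at this
    have := this i
    simpa using this
  have hd : ∀ i : Fin n, v i.succ - v i.castSucc = w i.succ - w i.castSucc := by
    intro i
    exact step_inj _ _ (hv.2.2 i) (hw.2.2 i) (h1 i) (h2 i)
  have hstep : ∀ m : ℕ, (hm : m ≤ n) → v ⟨m, by omega⟩ = w ⟨m, by omega⟩ := by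
    intro m
    induction m with
    | zero =>
      intro _
      have e0 : (⟨0, by omega⟩ : Fin (n+1)) = 0 := rfl
      rw [e0, hv.1, hw.1]
    | succ m ihm =>
      intro hm
      have hmn : m < n := by omega
      have hd' := hd ⟨m, hmn⟩
      rw [Fin.succ_mk, Fin.castSucc_mk] at hd'
      have := ihm (by omega)
      have : v ⟨m+1, by omega⟩ = w ⟨m+1, by omega⟩ := by
        have hv' : v ⟨m+1, by omega⟩ = (v ⟨m+1, by omega⟩ - v ⟨m, by omega⟩) + v ⟨m, by omega⟩ := by ring
        have hw' : w ⟨m+1, by omega⟩ = (w ⟨m+1, by omega⟩ - w ⟨m, by omega⟩) + w ⟨m, by omega⟩ := by ring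
        rw [hv', hw', hd', this]
      exact this
  funext p
  have := hstep p.1 (by omega)
  simpa [Fin.eta] using this

lemma W_le_choose (j k : ℕ) (hj : 2*(j:ℤ) = n + (x.1+x.2)) (hk : 2*(k:ℤ) = n + (x.1-x.2)) :
    W n x ≤ n.choose j * n.choose k := by
  classical
  have hWS : W n x = (S n x).ncard := rfl
  set T : Finset (Finset (Fin n) × Finset (Fin n)) :=
    (Finset.powersetCard j Finset.univ) ×ˢ (Finset.powersetCard k Finset.univ) with hT
  have hmaps : ∀ v ∈ S n x, fmap n v ∈ (T : Set (Finset (Fin n) × Finset (Fin n))) := by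
    intro v hv
    simp only [hT, fmap, Finset.coe_product, Set.mem_prod, Finset.mem_coe, Finset.mem_powersetCard]
    constructor
    · refine ⟨Finset.subset_univ _, ?_⟩
      have := walk_card1 n x hv
      omega
    · refine ⟨Finset.subset_univ _, ?_⟩
      have := walk_card2 n x hv
      omega
  have himg : fmap n '' (S n x) ⊆ (T : Set _) := by
    rintro _ ⟨v, hv, rfl⟩
    exact hmaps v hv
  have hfin : (T : Set (Finset (Fin n) × Finset (Fin n))).Finite := T.finite_toSet
  calc W n x = (S n x).ncard := hWS
    _ = (fmap n '' (S n x)).ncard := (Set.ncard_image_of_injOn (walk_inj n x)).symm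
    _ ≤ (T : Set _).ncard := Set.ncard_le_ncard himg hfin
    _ = T.card := Set.ncard_coe_finset T
    _ = n.choose j * n.choose k := by
        rw [hT, Finset.card_product, Finset.card_powersetCard, Finset.card_powersetCard,
          Finset.card_univ, Fintype.card_fin]

lemma exists_jk (hW : W n x ≠ 0) :
    ∃ j k : ℕ, 2*(j:ℤ) = n + (x.1+x.2) ∧ 2*(k:ℤ) = n + (x.1-x.2) := by
  have : (S n x).Nonempty := Set.nonempty_of_ncard_ne_zero hW
  obtain ⟨v, hv⟩ := this
  exact ⟨_, _, walk_card1 n x hv, walk_card2 n x hv⟩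

end walkcount

lemma gnorm_eq_max (x : ℤ × ℤ) :
    gnorm x = max (x.1+x.2).natAbs (x.1-x.2).natAbs := by
  simp only [gnorm]
  omega

lemma term_bound (n : ℕ) (x : ℤ × ℤ) (hn : 100 ≤ n) (hg : 100 ≤ gnorm x) :
    (W n x : ℝ) ≤ (7/24) * 4^n * Real.sqrt n /
      ((((gnorm x : ℝ)-1)^2/4) * Real.sqrt (((gnorm x : ℝ)-1)^2/4)) := by
  set g := gnorm x with hgdef
  have hgR : (100:ℝ) ≤ (g:ℝ) := by exact_mod_cast hg
  set c : ℝ := (((g:ℝ))-1)^2/4 with hcdef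
  have hc : 0 < c := by rw [hcdef]; nlinarith
  have hnR : (0:ℝ) < n := by positivity
  by_cases hW : W n x = 0
  · rw [hW]
    push_cast
    positivity
  · obtain ⟨j, k, hj, hk⟩ := exists_jk n x hW
    have hWle := W_le_choose n x j k hj hk
    set midR : ℝ := (n.choose (n/2) : ℝ) with hmid
    have hmid2 : midR^2 * n ≤ (67/100) * 4^n := middle_sq n (by omega)
    have hmidnn : 0 ≤ midR := by positivity
    -- which coordinate achieves the max
    have hmax := gnorm_eq_max x
    have hexpkey : (W n x : ℝ) ≤ midR^2 * Real.exp (-(((g:ℝ))-1)^2/(4*n)) := by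
      rcases max_cases ((x.1+x.2).natAbs) ((x.1-x.2).natAbs) with ⟨hmx, _⟩ | ⟨hmx, _⟩
      · -- |x1+x2| = g
        have hgn : (x.1+x.2).natAbs = g := by omega
        have h1 : (n.choose j : ℝ) ≤ midR * Real.exp (-(((g:ℝ))-1)^2/(4*n)) := by
          have := choose_exp_int n (x.1+x.2) j (by omega) hj (by omega)
          rwa [hgn] at this
        have h2 : (n.choose k : ℝ) ≤ midR := by
          rw [hmid]; exact_mod_cast Nat.choose_le_middle k n
        calc (W n x : ℝ) ≤ (n.choose j : ℝ) * (n.choose k : ℝ) := by exact_mod_cast hWle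
          _ ≤ (midR * Real.exp (-(((g:ℝ))-1)^2/(4*n))) * midR := by
              apply mul_le_mul h1 h2 (by positivity) (by positivity)
          _ = midR^2 * Real.exp (-(((g:ℝ))-1)^2/(4*n)) := by ring
      · have hgn : (x.1-x.2).natAbs = g := by omega
        have h1 : (n.choose k : ℝ) ≤ midR * Real.exp (-(((g:ℝ))-1)^2/(4*n)) := by
          have := choose_exp_int n (x.1-x.2) k (by omega) hk (by omega)
          rwa [hgn] at this
        have h2 : (n.choose j : ℝ) ≤ midR := by
          rw [hmid]; exact_mod_cast Nat.choose_le_middle j n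
        calc (W n x : ℝ) ≤ (n.choose j : ℝ) * (n.choose k : ℝ) := by exact_mod_cast hWle
          _ ≤ midR * (midR * Real.exp (-(((g:ℝ))-1)^2/(4*n))) := by
              apply mul_le_mul h2 h1 (by positivity) (by positivity)
          _ = midR^2 * Real.exp (-(((g:ℝ))-1)^2/(4*n)) := by ring
    have hexparg : (-(((g:ℝ))-1)^2/(4*n)) = -(c/n) := by
      rw [hcdef]; field_simp
    rw [hexparg] at hexpkey
    have hexp := exp_div_bound c hc n hnR
    have hmid3 : midR^2 ≤ (67/100) * 4^n / n := by
      rw [le_div_iff₀ hnR]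
      exact hmid2
    calc (W n x : ℝ) ≤ midR^2 * Real.exp (-(c/n)) := hexpkey
      _ ≤ ((67/100) * 4^n / n) * ((42/100) * (n * Real.sqrt n) / (c * Real.sqrt c)) := by
          apply mul_le_mul hmid3 hexp (le_of_lt (Real.exp_pos _)) (by positivity)
      _ = ((67/100) * (42/100)) * 4^n * Real.sqrt n / (c * Real.sqrt c) := by
          field_simp
      _ ≤ (7/24) * 4^n * Real.sqrt n / (c * Real.sqrt c) := by
          gcongr
          norm_num


/-- Lemma 3.6, eq. (3.16): contribution of walks of length between
`|x|²/(2 log |x|)` and `|x|²`. -/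
theorem stmt11 :
    ∃ M : ℕ, ∀ x : ℤ × ℤ, M ≤ gnorm x → ∀ κ : ℝ, 0 < κ →
      (∑ n ∈ Finset.Icc (⌊(gnorm x : ℝ) ^ 2 / (2 * Real.log (gnorm x))⌋₊ + 1) (gnorm x ^ 2),
        (1 / (4 + κ)) ^ n * (W n x : ℝ))
      ≤ 2 * (1 - κ / (4 + κ)) ^ ((gnorm x : ℝ) ^ 2 / (2 * Real.log (gnorm x))) := by
  use 100
  intro x hgx κ hκ
  set g := gnorm x with hgdef
  have hgR : (100:ℝ) ≤ (g:ℝ) := by exact_mod_cast hgx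
  set t : ℝ := (g:ℝ)^2/(2*Real.log g) with htdef
  set m := ⌊t⌋₊ with hmdef
  set N := g^2 with hNdef
  have h4κ : (0:ℝ) < 4 + κ := by linarith
  set r : ℝ := 4/(4+κ) with hrdef
  have hr0 : 0 < r := by positivity
  have hr1 : r < 1 := by
    rw [hrdef, div_lt_one h4κ]; linarith
  have hrw : 1 - κ/(4+κ) = r := by
    rw [hrdef]; field_simp; ring
  -- log bound and t ≥ 99
  have hg1 : (1:ℝ) < (g:ℝ) := by linarith
  have hL : 0 < Real.log g := Real.log_pos hg1
  have hsg : (10:ℝ) ≤ Real.sqrt g := by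
    have : Real.sqrt 100 ≤ Real.sqrt g := Real.sqrt_le_sqrt hgR
    rwa [show (100:ℝ) = 10^2 by norm_num, Real.sqrt_sq (by norm_num : (0:ℝ) ≤ 10)] at this
  have hsgsq : (Real.sqrt g)^2 = (g:ℝ) := Real.sq_sqrt (by linarith)
  have hlog : Real.log g ≤ 2 * Real.sqrt g := by
    have h1 : Real.log (Real.sqrt g) ≤ Real.sqrt g - 1 :=
      Real.log_le_sub_one_of_pos (by positivity)
    have h2 : Real.log (Real.sqrt g) = Real.log g / 2 := Real.log_sqrt (by positivity)
    linarith
  have ht99 : (99:ℝ) ≤ t := by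
    rw [htdef]
    rw [le_div_iff₀ (by positivity)]
    have : (99:ℝ) * (2 * Real.log g) ≤ 99 * (4 * Real.sqrt g) := by
      have := hlog; nlinarith
    have h2 : (99:ℝ) * (4 * Real.sqrt g) ≤ (g:ℝ)^2 := by
      have hgs : (g:ℝ) = (Real.sqrt g)^2 := hsgsq.symm
      nlinarith [Real.sqrt_nonneg (g:ℝ), hsg, hsgsq]
    linarith
  have hm99 : 99 ≤ m := by
    rw [hmdef]
    exact Nat.le_floor (by exact_mod_cast ht99)
  have htm : t < (m:ℝ) + 1 := Nat.lt_floor_add_one t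
  -- constants
  set c : ℝ := (((g:ℝ))-1)^2/4 with hcdef
  have hc : 0 < c := by rw [hcdef]; nlinarith
  have hcs : 0 < c * Real.sqrt c := by positivity
  -- termwise bound
  have hterm : ∀ n ∈ Finset.Icc (m+1) N,
      (1/(4+κ))^n * (W n x : ℝ) ≤ r^t * ((7/24) * Real.sqrt n / (c * Real.sqrt c)) := by
    intro n hn
    rw [Finset.mem_Icc] at hn
    have hn100 : 100 ≤ n := by omega
    have htn : t ≤ (n:ℝ) := by
      have : ((m:ℝ)) + 1 ≤ (n:ℝ) := by exact_mod_cast hn.1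
      linarith
    have hWb := term_bound n x hn100 hgx
    have hrn : r^(n:ℕ) ≤ r^t := by
      rw [← Real.rpow_natCast r n]
      exact Real.rpow_le_rpow_of_exponent_ge hr0 (le_of_lt hr1) htn
    have hsplit : (1/(4+κ))^n = r^n * (1/4)^n := by
      rw [hrdef, ← mul_pow]
      congr 1
      field_simp
    rw [hsplit]
    have h4n : (0:ℝ) < (4:ℝ)^n := by positivity
    calc r^n * (1/4)^n * (W n x : ℝ)
        ≤ r^n * (1/4)^n * ((7/24) * 4^n * Real.sqrt n / (c * Real.sqrt c)) := by
          apply mul_le_mul_of_nonneg_left hWb (by positivity)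
      _ = r^n * ((7/24) * Real.sqrt n / (c * Real.sqrt c)) := by
          rw [one_div, inv_pow]
          field_simp
      _ ≤ r^t * ((7/24) * Real.sqrt n / (c * Real.sqrt c)) := by
          apply mul_le_mul_of_nonneg_right hrn (by positivity)
  -- sum up
  have hsum1 : (∑ n ∈ Finset.Icc (m+1) N, (1/(4+κ))^n * (W n x : ℝ))
      ≤ ∑ n ∈ Finset.Icc (m+1) N, r^t * ((7/24) * Real.sqrt n / (c * Real.sqrt c)) :=
    Finset.sum_le_sum hterm
  have hsum2 : (∑ n ∈ Finset.Icc (m+1) N, r^t * ((7/24) * Real.sqrt n / (c * Real.sqrt c)))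
      = r^t * (7/24) / (c * Real.sqrt c) * (∑ n ∈ Finset.Icc (m+1) N, Real.sqrt n) := by
    rw [Finset.mul_sum]
    apply Finset.sum_congr rfl
    intro n _
    field_simp
  have hsum3 : (∑ n ∈ Finset.Icc (m+1) N, Real.sqrt n) ≤ ∑ n ∈ Finset.Icc 1 N, Real.sqrt n := by
    apply Finset.sum_le_sum_of_subset_of_nonneg
    · apply Finset.Icc_subset_Icc_left; omega
    · intro i _ _; positivity
  have hsum4 := sum_sqrt_le N
  -- final numeric bound
  have hNR : ((N:ℕ):ℝ) = (g:ℝ)^2 := by rw [hNdef]; push_cast; ring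
  have h174 : ((N:ℝ)) + 1 ≤ (17/4) * c := by
    rw [hNR, hcdef]
    nlinarith
  have hkey : ((N:ℝ)+1) * Real.sqrt ((N:ℝ)+1) ≤ 10 * (c * Real.sqrt c) := by
    have ha : (0:ℝ) ≤ (N:ℝ)+1 := by positivity
    have hb : (0:ℝ) ≤ c := le_of_lt hc
    have ha2 : (Real.sqrt ((N:ℝ)+1))^2 = (N:ℝ)+1 := Real.sq_sqrt ha
    have hb2 : (Real.sqrt c)^2 = c := Real.sq_sqrt hb
    have hX : (0:ℝ) ≤ ((N:ℝ)+1) * Real.sqrt ((N:ℝ)+1) := by positivity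
    have hY : (0:ℝ) ≤ 10 * (c * Real.sqrt c) := by positivity
    have hcube : ((N:ℝ)+1)^3 ≤ (17/4)^3 * c^3 := by
      calc ((N:ℝ)+1)^3 ≤ ((17/4)*c)^3 := pow_le_pow_left₀ ha h174 3
        _ = (17/4)^3 * c^3 := by ring
    have hsq : (((N:ℝ)+1) * Real.sqrt ((N:ℝ)+1))^2 ≤ (10 * (c * Real.sqrt c))^2 := by
      have e1 : (((N:ℝ)+1) * Real.sqrt ((N:ℝ)+1))^2 = ((N:ℝ)+1)^3 := by
        rw [mul_pow, ha2]; ring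
      have e2 : (10 * (c * Real.sqrt c))^2 = 100 * c^3 := by
        rw [mul_pow, mul_pow, hb2]; ring
      rw [e1, e2]
      nlinarith [hcube, pow_pos hc 3]
    have := Real.sqrt_le_sqrt (le_of_lt (lt_of_le_of_lt hsq (lt_add_one _)))
    have h' := Real.sqrt_le_sqrt hsq
    rwa [Real.sqrt_sq hX, Real.sqrt_sq hY] at h'
  have hrt : (0:ℝ) < r^t := Real.rpow_pos_of_pos hr0 t
  have hfinal : (∑ n ∈ Finset.Icc (m+1) N, (1/(4+κ))^n * (W n x : ℝ)) ≤ 2 * r^t := by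
    calc (∑ n ∈ Finset.Icc (m+1) N, (1/(4+κ))^n * (W n x : ℝ))
        ≤ r^t * (7/24) / (c * Real.sqrt c) * (∑ n ∈ Finset.Icc (m+1) N, Real.sqrt n) := by
          rw [← hsum2]; exact hsum1
      _ ≤ r^t * (7/24) / (c * Real.sqrt c) * ((2/3) * ((N:ℝ)+1) * Real.sqrt ((N:ℝ)+1)) := by
          apply mul_le_mul_of_nonneg_left _ (by positivity)
          calc (∑ n ∈ Finset.Icc (m+1) N, Real.sqrt n) ≤ ∑ n ∈ Finset.Icc 1 N, Real.sqrt n := hsum3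
            _ ≤ (2/3) * ((N:ℝ)+1) * Real.sqrt ((N:ℝ)+1) := hsum4
      _ ≤ r^t * (7/24) / (c * Real.sqrt c) * ((2/3) * (10 * (c * Real.sqrt c))) := by
          apply mul_le_mul_of_nonneg_left _ (by positivity)
          rw [mul_assoc]
          exact mul_le_mul_of_nonneg_left hkey (by norm_num)
      _ = r^t * (140/72) := by field_simp; ring
      _ ≤ 2 * r^t := by nlinarith [hrt]
  rw [hrw]
  exact hfinal
end

section
/- There exists m₀ such that for every real number m ≥ m₀, every killing rate κ > 0 with e⁹ ≤ κ^{−1} ≤ m, and every x ∈ ℤ² with |x| ≥ m^{1/log G^{o,o}} · κ^{−1/2}, the Green's function satisfies G^{o,x} ≤ m^{−1/(2 log G^{o,o})}. (Under these hypotheses G^{o,o} > 1, so log G^{o,o} > 0.) -/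
open scoped Real

namespace Stmt12Aux

open Real

variable {n' : ℕ}

/-- the four unit steps -/
def S : Finset (ℤ × ℤ) := {(1,0), (-1,0), (0,1), (0,-1)}

lemma gnorm_eq_one_iff {y : ℤ × ℤ} : gnorm y = 1 ↔ y ∈ S := by
  obtain ⟨a, b⟩ := y
  simp only [gnorm, S, Finset.mem_insert, Finset.mem_singleton, Prod.mk.injEq]
  omega

/-- step sequences of length `n` with sum `x` -/
def stepFinset (n : ℕ) (x : ℤ × ℤ) : Finset (Fin n → ℤ × ℤ) :=
  (Fintype.piFinset fun _ => S).filter (fun s => ∑ i, s i = x)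

/-- partial sums -/
def psum (n : ℕ) (s : Fin n → ℤ × ℤ) : Fin (n+1) → ℤ × ℤ :=
  fun j => ∑ i ∈ Finset.univ.filter (fun i : Fin n => (i : ℕ) < (j : ℕ)), s i

lemma telescope {M : Type*} [AddCommGroup M] :
    ∀ (n : ℕ) (v : Fin (n+1) → M),
      ∑ i : Fin n, (v i.succ - v i.castSucc) = v (Fin.last n) - v 0 := by
  intro n
  induction n with
  | zero => intro v; simp [Fin.last]
  | succ n ih =>
    intro v
    rw [Fin.sum_univ_castSucc]
    have h1 : ∀ i : Fin n, (i.castSucc).succ = (i.succ).castSucc := by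
      intro i; ext; simp
    have := ih (fun j => v j.castSucc)
    simp only [h1] at *
    rw [this]
    have : (Fin.last n).succ = Fin.last (n+1) := by ext; simp [Fin.last]
    rw [this, Fin.castSucc_zero]
    abel
variable {n : ℕ}

lemma psum_zero (s : Fin n → ℤ × ℤ) : psum n s 0 = 0 := by
  simp [psum]

lemma psum_last (s : Fin n → ℤ × ℤ) : psum n s (Fin.last n) = ∑ i, s i := by
  unfold psum
  congr 1
  ext i
  simp [Fin.last, i.isLt]

lemma psum_diff (s : Fin n → ℤ × ℤ) (j : Fin n) :
    psum n s j.succ - psum n s j.castSucc = s j := by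
  unfold psum
  have h : Finset.univ.filter (fun i : Fin n => (i : ℕ) < (j.succ : ℕ))
      = insert j (Finset.univ.filter (fun i : Fin n => (i : ℕ) < (j.castSucc : ℕ))) := by
    ext i
    simp only [Finset.mem_filter, Finset.mem_univ, true_and, Finset.mem_insert,
      Fin.val_succ, Fin.coe_castSucc, Fin.ext_iff]
    omega
  rw [h, Finset.sum_insert (by simp)]
  abel

lemma walk_ext {v w : Fin (n+1) → ℤ × ℤ} (h0 : v 0 = w 0)
    (hd : ∀ i : Fin n, v i.succ - v i.castSucc = w i.succ - w i.castSucc) : v = w := by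
  funext j
  induction j using Fin.induction with
  | zero => exact h0
  | succ i ih =>
    have := hd i
    have h2 : v i.succ = v i.castSucc + (w i.succ - w i.castSucc) := by
      rw [← this]; abel
    rw [h2, ih]; abel
lemma W_eq (n : ℕ) (x : ℤ × ℤ) : W n x = (stepFinset n x).card := by
  have himg : {v : Fin (n + 1) → ℤ × ℤ |
      v 0 = (0, 0) ∧ v (Fin.last n) = x ∧
      ∀ i : Fin n, gnorm (v i.succ - v i.castSucc) = 1}
      = psum n '' (stepFinset n x : Set (Fin n → ℤ × ℤ)) := by
    ext v
    constructor
    · rintro ⟨h0, hl, hs⟩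
      refine ⟨fun i => v i.succ - v i.castSucc, ?_, ?_⟩
      · simp only [stepFinset, Finset.coe_filter, Set.mem_setOf_eq,
          Fintype.mem_piFinset]
        constructor
        · intro i; exact gnorm_eq_one_iff.mp (hs i)
        · rw [telescope n v, h0, hl]; simp
      · refine (walk_ext ?_ ?_).symm
        · rw [psum_zero, h0]; rfl
        · intro i; rw [psum_diff]
    · rintro ⟨s, hs, rfl⟩
      simp only [stepFinset, Finset.coe_filter, Set.mem_setOf_eq,
        Fintype.mem_piFinset] at hs
      refine ⟨by rw [psum_zero]; rfl, by rw [psum_last, hs.2], ?_⟩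
      intro i; rw [psum_diff]; exact gnorm_eq_one_iff.mpr (hs.1 i)
  have hinj : Function.Injective (psum n) := by
    intro s t h
    funext i
    have := psum_diff s i
    rw [h, psum_diff] at this
    exact this.symm
  rw [W, himg, Set.ncard_image_of_injective _ hinj, Set.ncard_coe_finset]
lemma cosh_bound {l : ℝ} (h : |l| ≤ 1) : exp l + exp (-l) ≤ 2 + 3/2 * l^2 := by
  have h1 := Real.exp_bound h (n := 2) (by norm_num)
  have h2 := Real.exp_bound (x := -l) (by rwa [abs_neg]) (n := 2) (by norm_num)
  simp only [Finset.sum_range_succ, Finset.sum_range_zero] at h1 h2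
  norm_num at h1 h2
  rw [abs_le] at *
  have e1 : exp l ≤ 1 + l + 3/4 * l^2 := by nlinarith [abs_nonneg l, sq_abs l, h1.1, h1.2]
  have e2 : exp (-l) ≤ 1 - l + 3/4 * l^2 := by nlinarith [sq_abs l, neg_sq l, h2.1, h2.2]
  nlinarith

lemma sign_mul_cast (a : ℤ) :
    (if 0 ≤ a then (1:ℝ) else -1) * (a : ℝ) = (a.natAbs : ℝ) := by
  rw [Nat.cast_natAbs, Int.cast_abs]
  split_ifs with h
  · rw [one_mul, abs_of_nonneg (by exact_mod_cast h)]
  · rw [abs_of_neg (by exact_mod_cast (not_le.mp h))]; push_cast; ring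

lemma chernoff (n : ℕ) (x : ℤ × ℤ) (l : ℝ) :
    ((stepFinset n x).card : ℝ) * Real.exp (l * (gnorm x : ℝ))
      ≤ (2 * (Real.exp l + Real.exp (-l))) ^ n := by
  set e1 : ℝ := if 0 ≤ x.1 then 1 else -1 with he1
  set e2 : ℝ := if 0 ≤ x.2 then 1 else -1 with he2
  set φ : ℤ × ℤ → ℝ := fun y => e1 * (y.1 : ℝ) + e2 * (y.2 : ℝ) with hφ
  have hφx : φ x = (gnorm x : ℝ) := by
    simp only [hφ, gnorm, he1, he2, Nat.cast_add]
    rw [sign_mul_cast, sign_mul_cast]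
  -- step 1: card * exp = sum over filter
  have h1 : ((stepFinset n x).card : ℝ) * Real.exp (l * (gnorm x : ℝ))
      = ∑ s ∈ stepFinset n x, Real.exp (l * φ (∑ i, s i)) := by
    rw [Finset.sum_congr rfl (fun s hs => ?_), Finset.sum_const, nsmul_eq_mul]
    have : ∑ i, s i = x := (Finset.mem_filter.mp hs).2
    rw [this, hφx]
  rw [h1]
  have h2 : ∑ s ∈ stepFinset n x, Real.exp (l * φ (∑ i, s i))
      ≤ ∑ s ∈ Fintype.piFinset (fun _ : Fin n => S), Real.exp (l * φ (∑ i, s i)) :=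
    Finset.sum_le_sum_of_subset_of_nonneg (Finset.filter_subset _ _)
      (fun _ _ _ => (Real.exp_pos _).le)
  refine h2.trans ?_
  have h3 : ∀ s : Fin n → ℤ × ℤ, Real.exp (l * φ (∑ i, s i))
      = ∏ i, Real.exp (l * φ (s i)) := by
    intro s
    rw [← Real.exp_sum]
    congr 1
    simp only [hφ, Prod.fst_sum, Prod.snd_sum, Int.cast_sum, Finset.mul_sum, ← Finset.sum_add_distrib]
  simp only [h3]
  rw [Finset.sum_prod_piFinset S (fun _ y => Real.exp (l * φ y))]
  have h4 : ∑ y ∈ S, Real.exp (l * φ y) ≤ 2 * (Real.exp l + Real.exp (-l)) := by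
    have hS : ∑ y ∈ S, Real.exp (l * φ y)
        = Real.exp (l * e1) + Real.exp (l * (-e1)) + Real.exp (l * e2) + Real.exp (l * (-e2)) := by
      simp only [S]
      rw [Finset.sum_insert (by decide), Finset.sum_insert (by decide),
        Finset.sum_insert (by decide), Finset.sum_singleton]
      simp only [hφ]
      push_cast
      ring_nf
    rw [hS]
    have he : ∀ e : ℝ, (e = 1 ∨ e = -1) →
        Real.exp (l * e) + Real.exp (l * (-e)) = Real.exp l + Real.exp (-l) := by
      rintro e (rfl | rfl) <;> ring_nf <;> rw [add_comm]
    have g1 : e1 = 1 ∨ e1 = -1 := by rw [he1]; split_ifs <;> simp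
    have g2 : e2 = 1 ∨ e2 = -1 := by rw [he2]; split_ifs <;> simp
    have := he e1 g1
    have := he e2 g2
    nlinarith [Real.exp_pos l, Real.exp_pos (-l)]
  calc ∏ _i : Fin n, ∑ y ∈ S, Real.exp (l * φ y)
      ≤ ∏ _i : Fin n, (2 * (Real.exp l + Real.exp (-l))) := by
        refine Finset.prod_le_prod (fun _ _ => Finset.sum_nonneg fun _ _ => (Real.exp_pos _).le)
          (fun _ _ => h4)
    _ = (2 * (Real.exp l + Real.exp (-l))) ^ n := by
        rw [Finset.prod_const, Finset.card_univ, Fintype.card_fin]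
def Bset (n : ℕ) : Finset (Fin n → ℤ) :=
  (Fintype.piFinset fun _ => ({1, -1} : Finset ℤ)).filter (fun ε => ∑ i, ε i = 0)

lemma cb_sq (k : ℕ) : (k + 1) * (Nat.centralBinom k) ^ 2 ≤ 16 ^ k := by
  induction k with
  | zero => simp [Nat.centralBinom]
  | succ k ih =>
    have key : (k + 1) * Nat.centralBinom (k + 1) = 2 * (2 * k + 1) * Nat.centralBinom k :=
      Nat.succ_mul_centralBinom_succ k
    have h1 : (k+1)^2 * ((k + 2) * Nat.centralBinom (k+1) ^ 2)
        = (k + 2) * (2 * (2*k+1))^2 * Nat.centralBinom k ^ 2 := by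
      have h : ((k+1) * Nat.centralBinom (k+1))^2 = (2 * (2*k+1) * Nat.centralBinom k)^2 := by
        rw [key]
      nlinarith [h]
    have h2 : (k + 2) * (2 * (2*k+1))^2 * Nat.centralBinom k ^ 2
        ≤ (k+1)^2 * 16 * ((k+1) * Nat.centralBinom k ^ 2) := by
      have hc : (k + 2) * (2 * (2*k+1))^2 ≤ (k+1)^2 * 16 * (k+1) := by nlinarith
      calc (k + 2) * (2 * (2*k+1))^2 * Nat.centralBinom k ^ 2
          ≤ ((k+1)^2 * 16 * (k+1)) * Nat.centralBinom k ^ 2 :=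
            Nat.mul_le_mul_right _ hc
        _ = (k+1)^2 * 16 * ((k+1) * Nat.centralBinom k ^ 2) := by ring
    have h3 : (k+1)^2 * ((k + 2) * Nat.centralBinom (k+1) ^ 2)
        ≤ (k+1)^2 * (16 * 16 ^ k) := by
      rw [h1]
      calc (k + 2) * (2 * (2*k+1))^2 * Nat.centralBinom k ^ 2
          ≤ (k+1)^2 * 16 * ((k+1) * Nat.centralBinom k ^ 2) := h2
        _ ≤ (k+1)^2 * 16 * 16 ^ k := Nat.mul_le_mul_left _ ih
        _ = (k+1)^2 * (16 * 16 ^ k) := by ring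
    have hpos : 0 < (k+1)^2 := by positivity
    have := Nat.le_of_mul_le_mul_left h3 hpos
    calc (k + 1 + 1) * Nat.centralBinom (k+1) ^ 2 = (k + 2) * Nat.centralBinom (k+1) ^ 2 := by ring_nf
      _ ≤ 16 * 16 ^ k := this
      _ = 16 ^ (k+1) := by ring

lemma bset_half {n : ℕ} {s : Fin n → ℤ} (hs : s ∈ Bset n) :
    n = 2 * (Finset.univ.filter (fun i => s i = 1)).card := by
  simp only [Bset, Finset.mem_filter, Fintype.mem_piFinset, Finset.mem_insert,
    Finset.mem_singleton] at hs
  obtain ⟨hv, hsum⟩ := hs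
  have key : (0 : ℤ) = (Finset.univ.filter (fun i => s i = 1)).card
      - ((n : ℤ) - (Finset.univ.filter (fun i => s i = 1)).card) := by
    rw [← hsum, ← Finset.sum_filter_add_sum_filter_not Finset.univ (fun i => s i = 1)]
    have e1 : ∑ i ∈ Finset.univ.filter (fun i => s i = 1), s i
        = ((Finset.univ.filter (fun i : Fin n => s i = 1)).card : ℤ) := by
      rw [Finset.sum_congr rfl (fun i hi => (Finset.mem_filter.mp hi).2)]
      simp
    have e2 : ∑ i ∈ Finset.univ.filter (fun i => ¬ s i = 1), s i
        = -(((Finset.univ.filter (fun i : Fin n => ¬ s i = 1)).card : ℤ)) := by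
      have hall : ∀ i ∈ Finset.univ.filter (fun i : Fin n => ¬ s i = 1), s i = -1 :=
        fun i hi => (hv i).resolve_left (Finset.mem_filter.mp hi).2
      rw [Finset.sum_congr rfl hall, Finset.sum_const]
      simp
    have e3 : ((Finset.univ.filter (fun i : Fin n => ¬ s i = 1)).card : ℤ)
        = (n : ℤ) - (Finset.univ.filter (fun i : Fin n => s i = 1)).card := by
      have h := Finset.card_filter_add_card_filter_not
        (s := (Finset.univ : Finset (Fin n))) (p := fun i => s i = 1)
      simp only [Finset.card_univ, Fintype.card_fin] at h
      push_cast [← h]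
      ring
    rw [e1, e2, e3]
    ring
  omega

lemma bset_card (n : ℕ) : (n / 2 + 1) * (Bset n).card ^ 2 ≤ 4 ^ n := by
  rcases Nat.even_or_odd n with ⟨k, hk⟩ | ⟨k, hk⟩
  · subst hk
    have hcard : (Bset (k + k)).card ≤ Nat.centralBinom k := by
      have hinj : ∀ s ∈ Bset (k+k), ∀ t ∈ Bset (k+k),
          (Finset.univ.filter (fun i => s i = 1)) = (Finset.univ.filter (fun i => t i = 1))
          → s = t := by
        intro s hs t ht hft
        simp only [Bset, Finset.mem_filter, Fintype.mem_piFinset, Finset.mem_insert,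
          Finset.mem_singleton] at hs ht
        funext i
        by_cases h : s i = 1
        · have : i ∈ Finset.univ.filter (fun i => s i = 1) := by simp [h]
          rw [hft] at this
          rw [h, (Finset.mem_filter.mp this).2]
        · have hi : i ∉ Finset.univ.filter (fun i => t i = 1) := by
            rw [← hft]; simp [h]
          have ht1 : ¬ t i = 1 := by simpa using hi
          rw [(hs.1 i).resolve_left h, ((ht.1 i).resolve_left ht1)]
      have hmap : ∀ s ∈ Bset (k+k),
          (Finset.univ.filter (fun i => s i = 1)) ∈ Finset.univ.powersetCard k (α := Fin (k+k)) := by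
        intro s hs
        rw [Finset.mem_powersetCard]
        exact ⟨Finset.subset_univ _, by have := bset_half hs; omega⟩
      have := Finset.card_le_card_of_injOn _ hmap (fun s hs t ht h => hinj s hs t ht h)
      rw [Finset.card_powersetCard, Finset.card_univ, Fintype.card_fin] at this
      refine this.trans ?_
      rw [Nat.centralBinom, (by omega : 2 * k = k + k)]
    have hdiv : (k + k) / 2 = k := by omega
    rw [hdiv]
    calc (k + 1) * (Bset (k+k)).card ^ 2 ≤ (k+1) * Nat.centralBinom k ^ 2 := by
          exact Nat.mul_le_mul_left _ (Nat.pow_le_pow_left hcard 2)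
      _ ≤ 16 ^ k := cb_sq k
      _ = 4 ^ (k + k) := by rw [(by norm_num : (16 : ℕ) = 4 ^ 2), ← pow_mul]; ring_nf
  · have : Bset n = ∅ := by
      rw [Finset.eq_empty_iff_forall_notMem]
      intro s hs
      have := bset_half hs
      omega
    rw [this]
    simp
lemma step_sq (n : ℕ) : (stepFinset n (0,0)).card ≤ (Bset n).card ^ 2 := by
  classical
  set F : (Fin n → ℤ × ℤ) → (Fin n → ℤ) × (Fin n → ℤ) :=
    fun s => (fun i => (s i).1 + (s i).2, fun i => (s i).1 - (s i).2) with hF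
  have hmap : ∀ s ∈ stepFinset n (0,0), F s ∈ (Bset n) ×ˢ (Bset n) := by
    intro s hs
    simp only [stepFinset, Finset.mem_filter, Fintype.mem_piFinset] at hs
    obtain ⟨hv, hsum⟩ := hs
    have h1 : (∑ i, s i).1 = 0 := by rw [hsum]
    have h2 : (∑ i, s i).2 = 0 := by rw [hsum]
    rw [Prod.fst_sum] at h1
    rw [Prod.snd_sum] at h2
    rw [Finset.mem_product]
    constructor <;>
    · simp only [Bset, Finset.mem_filter, Fintype.mem_piFinset, Finset.mem_insert,
        Finset.mem_singleton, hF]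
      constructor
      · intro i
        have := hv i
        simp only [S, Finset.mem_insert, Finset.mem_singleton] at this
        rcases this with h | h | h | h <;> rw [h] <;> norm_num
      · first
          | (rw [Finset.sum_add_distrib, h1, h2]; ring)
          | (rw [Finset.sum_sub_distrib, h1, h2]; ring)
  have hinj : Set.InjOn F (stepFinset n (0,0)) := by
    intro s _ t _ h
    simp only [hF, Prod.mk.injEq] at h
    obtain ⟨ha, hb⟩ := h
    funext i
    have ea := congrFun ha i
    have eb := congrFun hb i
    have e1 : (s i).1 = (t i).1 := by omega
    have e2 : (s i).2 = (t i).2 := by omega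
    exact Prod.ext e1 e2
  have := Finset.card_le_card_of_injOn F hmap hinj
  rwa [Finset.card_product, ← sq] at this
lemma S_card : S.card = 4 := by decide

lemma step_le (n : ℕ) (x : ℤ × ℤ) : (stepFinset n x).card ≤ 4 ^ n := by
  calc (stepFinset n x).card ≤ (Fintype.piFinset fun _ : Fin n => S).card :=
        Finset.card_le_card (Finset.filter_subset _ _)
    _ = 4 ^ n := by
        rw [Fintype.card_piFinset]
        simp [S_card]

lemma step_zero : (stepFinset 0 (0,0)).card = 1 := by decide

lemma step_two : 1 ≤ (stepFinset 2 (0,0)).card := by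
  refine Finset.card_pos.mpr ⟨![(1,0),(-1,0)], ?_⟩
  simp only [stepFinset, Finset.mem_filter, Fintype.mem_piFinset]
  constructor
  · intro i
    fin_cases i <;> simp [S]
  · decide
lemma W_le_pow (n : ℕ) (x : ℤ × ℤ) : W n x ≤ 4 ^ n := by
  rw [W_eq]; exact step_le n x

lemma W_zero : W 0 (0,0) = 1 := by rw [W_eq]; exact step_zero

lemma W_two : 1 ≤ W 2 (0,0) := by rw [W_eq]; exact step_two

lemma W_chernoff (n : ℕ) (x : ℤ × ℤ) (l : ℝ) :
    (W n x : ℝ) * Real.exp (l * (gnorm x : ℝ)) ≤ (2 * (Real.exp l + Real.exp (-l))) ^ n := by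
  rw [W_eq]; exact chernoff n x l

lemma W_diag (n : ℕ) : ((n : ℝ) + 1) * (W n (0,0) : ℝ) ≤ 2 * 4 ^ n := by
  have h1 : (n+1) * (W n (0,0)) ≤ 2 * 4 ^ n := by
    rw [W_eq]
    calc (n+1) * (stepFinset n (0,0)).card
        ≤ (n+1) * (Bset n).card ^ 2 := Nat.mul_le_mul_left _ (step_sq n)
      _ ≤ (2 * (n/2+1)) * (Bset n).card ^ 2 := Nat.mul_le_mul_right _ (by omega)
      _ = 2 * ((n/2+1) * (Bset n).card ^ 2) := by ring
      _ ≤ 2 * 4 ^ n := Nat.mul_le_mul_left _ (bset_card n)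
  exact_mod_cast h1
lemma kappa_le_one {κ : ℝ} (hκ : 0 < κ) (hκ9 : Real.exp 9 ≤ κ⁻¹) : κ ≤ 1 := by
  rw [← inv_inv κ]
  calc κ⁻¹⁻¹ ≤ (Real.exp 9)⁻¹ := by
        apply inv_anti₀ (Real.exp_pos _) hκ9
    _ ≤ 1 := by
        rw [inv_le_one_iff₀]
        right
        have := Real.add_one_le_exp (9:ℝ)
        linarith
section
variable {κ : ℝ} (hκ : 0 < κ)

include hκ

lemma term_nonneg (x : ℤ × ℤ) (n : ℕ) : 0 ≤ (1 / (4 + κ)) ^ n * (W n x : ℝ) := by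
  have h4 : (0:ℝ) < 4 + κ := by linarith
  positivity

lemma ratio_lt : 4 / (4 + κ) < 1 := by
  rw [div_lt_one (by linarith)]; linarith

lemma summable_term (x : ℤ × ℤ) : Summable (fun n => (1 / (4 + κ)) ^ n * (W n x : ℝ)) := by
  refine Summable.of_nonneg_of_le (term_nonneg hκ x) (fun n => ?_)
    (summable_geometric_of_lt_one (by positivity) (ratio_lt hκ))
  have h4 : (0:ℝ) < 4 + κ := by linarith
  have hW : (W n x : ℝ) ≤ 4 ^ n := by exact_mod_cast W_le_pow n x
  calc (1 / (4 + κ)) ^ n * (W n x : ℝ) ≤ (1 / (4 + κ)) ^ n * 4 ^ n := by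
        refine mul_le_mul_of_nonneg_left hW (by positivity)
    _ = (4 / (4 + κ)) ^ n := by rw [← mul_pow]; ring_nf

lemma G_lower (hκ1 : κ ≤ 1) : 26/25 ≤ G κ (0,0) := by
  have h4 : (0:ℝ) < 4 + κ := by linarith
  have hfin : ∑ n ∈ ({0, 2} : Finset ℕ), (1 / (4 + κ)) ^ n * (W n (0,0) : ℝ) ≤ G κ (0,0) :=
    Summable.sum_le_tsum _ (fun n _ => term_nonneg hκ (0,0) n) (summable_term hκ (0,0))
  rw [Finset.sum_insert (by decide), Finset.sum_singleton] at hfin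
  refine le_trans ?_ hfin
  rw [W_zero]
  have hW2 : (1 : ℝ) ≤ (W 2 (0,0) : ℝ) := by exact_mod_cast W_two
  have h5 : (1 / (4 + κ)) ^ 2 ≥ (1/5)^2 := by
    apply pow_le_pow_left₀ (by positivity)
    rw [div_le_div_iff₀ (by norm_num) h4]
    linarith
  have : (1/5 : ℝ)^2 * 1 ≤ (1 / (4 + κ)) ^ 2 * (W 2 (0,0) : ℝ) := by
    apply mul_le_mul h5 hW2 (by norm_num) (by positivity)
  push_cast
  norm_num at this ⊢
  linarith

lemma G_decay (x : ℤ × ℤ) (hκ1 : κ ≤ 1) :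
    G κ x ≤ 15 / (2 * κ) * Real.exp (-(Real.sqrt κ / 3) * (gnorm x : ℝ)) := by
  have h4 : (0:ℝ) < 4 + κ := by linarith
  set l : ℝ := Real.sqrt κ / 3 with hl
  set d : ℝ := (gnorm x : ℝ) with hd
  have hd0 : 0 ≤ d := Nat.cast_nonneg _
  have hsl : Real.sqrt κ ≤ 1 := by
    rw [show (1:ℝ) = Real.sqrt 1 by simp]
    exact Real.sqrt_le_sqrt hκ1
  have hl0 : 0 ≤ l := by positivity
  have hla : |l| ≤ 1 := by rw [abs_of_nonneg hl0]; linarith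
  have hcosh : 2 * (Real.exp l + Real.exp (-l)) ≤ 4 + κ/3 := by
    have := cosh_bound hla
    have hsq : l^2 = κ / 9 := by
      rw [hl, div_pow, Real.sq_sqrt hκ.le]; norm_num
    nlinarith
  set ρ : ℝ := (4 + κ/3) / (4 + κ) with hρ
  have hρ0 : 0 ≤ ρ := by positivity
  have hρ1 : ρ < 1 := by rw [hρ, div_lt_one h4]; linarith
  have hterm : ∀ n : ℕ, (1 / (4 + κ)) ^ n * (W n x : ℝ)
      ≤ Real.exp (-(l * d)) * ρ ^ n := by
    intro n
    have hch := (W_chernoff n x l).trans (pow_le_pow_left₀ (by positivity) hcosh n)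
    have key : (W n x : ℝ) ≤ Real.exp (-(l * d)) * (4 + κ/3) ^ n := by
      have h := mul_le_mul_of_nonneg_right hch (Real.exp_pos (-(l * d))).le
      rwa [mul_assoc, ← Real.exp_add, add_neg_cancel, Real.exp_zero, mul_one,
        mul_comm ((4 + κ/3) ^ n)] at h
    calc (1 / (4 + κ)) ^ n * (W n x : ℝ)
        ≤ (1 / (4 + κ)) ^ n * (Real.exp (-(l * d)) * (4 + κ/3) ^ n) :=
          mul_le_mul_of_nonneg_left key (by positivity)
      _ = Real.exp (-(l * d)) * ((1 / (4 + κ)) * (4 + κ/3)) ^ n := by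
          rw [mul_pow]; ring
      _ = Real.exp (-(l * d)) * ρ ^ n := by
          rw [hρ]
          congr 2
          field_simp
  have hgeo : Summable (fun n : ℕ => Real.exp (-(l * d)) * ρ ^ n) :=
    (summable_geometric_of_lt_one hρ0 hρ1).mul_left _
  have hG : G κ x ≤ ∑' n : ℕ, Real.exp (-(l * d)) * ρ ^ n :=
    Summable.tsum_le_tsum hterm (summable_term hκ x) hgeo
  rw [tsum_mul_left, tsum_geometric_of_lt_one hρ0 hρ1] at hG
  refine hG.trans ?_
  rw [neg_mul l d] at *
  rw [mul_comm (15 / (2 * κ))]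
  refine mul_le_mul_of_nonneg_left ?_ (Real.exp_pos _).le
  have h1ρ : 1 - ρ = (2 * κ / 3) / (4 + κ) := by
    rw [hρ]; field_simp; ring
  rw [h1ρ, inv_div, div_le_div_iff₀ (by positivity) (by positivity)]
  nlinarith

lemma G_upper (hκ9 : Real.exp 9 ≤ κ⁻¹) : G κ (0,0) ≤ 5 * Real.log κ⁻¹ := by
  have h4 : (0:ℝ) < 4 + κ := by linarith
  have hκ1 : κ ≤ 1 := by
    rw [← inv_inv κ]
    calc κ⁻¹⁻¹ ≤ (Real.exp 9)⁻¹ := by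
          apply inv_anti₀ (Real.exp_pos _) hκ9
      _ ≤ 1 := by
          rw [inv_le_one_iff₀]
          right
          have := Real.add_one_le_exp (9:ℝ)
          linarith
  set t : ℝ := 4 / (4 + κ) with ht
  have ht0 : 0 < t := by positivity
  have ht1 : t < 1 := ratio_lt hκ
  have habs : |t| < 1 := by rwa [abs_of_pos ht0]
  have hhs := (hasSum_pow_div_log_of_abs_lt_one habs).mul_left (2 * (1/t))
  have hterm : ∀ n : ℕ, (1 / (4 + κ)) ^ n * (W n (0,0) : ℝ)
      ≤ 2 * (1/t) * (t ^ (n+1) / (n+1)) := by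
    intro n
    have hn1 : (0:ℝ) < (n:ℝ) + 1 := by positivity
    have hWd := W_diag n
    have hW : (W n (0,0) : ℝ) ≤ 2 * 4 ^ n / ((n:ℝ)+1) := by
      rw [le_div_iff₀ hn1]; linarith
    calc (1 / (4 + κ)) ^ n * (W n (0,0) : ℝ)
        ≤ (1 / (4 + κ)) ^ n * (2 * 4 ^ n / ((n:ℝ)+1)) :=
          mul_le_mul_of_nonneg_left hW (by positivity)
      _ = 2 * ((1 / (4 + κ)) * 4) ^ n / ((n:ℝ)+1) := by rw [mul_pow]; ring
      _ = 2 * t ^ n / ((n:ℝ)+1) := by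
          rw [ht, one_div, inv_mul_eq_div]
      _ = 2 * (1/t) * (t ^ (n+1) / (n+1)) := by
          rw [pow_succ]
          field_simp
  have hG : G κ (0,0) ≤ 2 * (1/t) * (-Real.log (1 - t)) :=
    Summable.tsum_le_tsum hterm (summable_term hκ (0,0)) hhs.summable |>.trans_eq hhs.tsum_eq
  refine hG.trans ?_
  have h1t : 1 - t = κ / (4 + κ) := by rw [ht]; field_simp; ring
  have hlog : -Real.log (1 - t) = Real.log (4 + κ) + Real.log κ⁻¹ := by
    rw [h1t, Real.log_div (ne_of_gt hκ) (ne_of_gt h4), Real.log_inv]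
    ring
  have hlogκ : (9:ℝ) ≤ Real.log κ⁻¹ := by
    calc (9:ℝ) = Real.log (Real.exp 9) := (Real.log_exp 9).symm
      _ ≤ Real.log κ⁻¹ := Real.log_le_log (Real.exp_pos _) hκ9
  have hlog5 : Real.log (4 + κ) ≤ Real.log κ⁻¹ := by
    calc Real.log (4 + κ) ≤ Real.log 5 := Real.log_le_log h4 (by linarith)
      _ ≤ 9 := by
          rw [show (9:ℝ) = Real.log (Real.exp 9) by rw [Real.log_exp]]
          apply Real.log_le_log (by norm_num)
          have := Real.add_one_le_exp (9:ℝ)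
          linarith
      _ ≤ Real.log κ⁻¹ := hlogκ
  have htinv : 1/t ≤ 5/4 := by
    rw [ht]
    rw [one_div_div]
    rw [div_le_div_iff₀ (by norm_num) (by norm_num)]
    linarith
  have hlogpos : 0 ≤ -Real.log (1 - t) := by
    rw [hlog]
    have h1 : 0 ≤ Real.log (4+κ) := Real.log_nonneg (by linarith)
    linarith
  calc 2 * (1/t) * (-Real.log (1 - t)) ≤ 2 * (5/4) * (-Real.log (1 - t)) := by
        apply mul_le_mul_of_nonneg_right (by linarith) hlogpos
    _ = 5/2 * (Real.log (4+κ) + Real.log κ⁻¹) := by rw [hlog]; ring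
    _ ≤ 5/2 * (2 * Real.log κ⁻¹) := by
        apply mul_le_mul_of_nonneg_left (by linarith) (by norm_num)
    _ = 5 * Real.log κ⁻¹ := by ring

end
lemma log_le_four_rpow {y : ℝ} (hy : 0 < y) : Real.log y ≤ 4 * y ^ ((1:ℝ)/4) := by
  have h : Real.log (y ^ ((1:ℝ)/4)) = (1/4) * Real.log y := Real.log_rpow hy _
  have h2 : Real.log (y ^ ((1:ℝ)/4)) ≤ y ^ ((1:ℝ)/4) - 1 :=
    Real.log_le_sub_one_of_pos (Real.rpow_pos_of_pos hy _)
  nlinarith [Real.rpow_pos_of_pos hy ((1:ℝ)/4)]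

set_option maxHeartbeats 1000000 in
lemma main_arith {m κ L d Gx : ℝ} (hm : Real.exp 12544 ≤ m) (hκ : 0 < κ)
    (hκ9 : Real.exp 9 ≤ κ⁻¹) (hκm : κ⁻¹ ≤ m)
    (hL1 : 1/26 ≤ L) (hL2 : L ≤ Real.log (5 * Real.log m))
    (hGx : Gx ≤ 15 / (2 * κ) * Real.exp (-(Real.sqrt κ / 3) * d))
    (hd : m ^ (1 / L) * κ⁻¹ ^ ((1 : ℝ) / 2) ≤ d) :
    Gx ≤ m ^ (-(1 / (2 * L))) := by
  have hm1 : (1:ℝ) < m := lt_of_lt_of_le (by nlinarith [Real.add_one_le_exp (12544:ℝ)]) hm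
  have hm0 : (0:ℝ) < m := by linarith
  set u : ℝ := Real.log m with hu
  have hu1 : 12544 ≤ u := by
    calc (12544:ℝ) = Real.log (Real.exp 12544) := (Real.log_exp _).symm
      _ ≤ u := Real.log_le_log (Real.exp_pos _) hm
  have hu0 : 0 < u := by linarith
  have hL0 : 0 < L := by linarith
  have hsκ : 0 < Real.sqrt κ := Real.sqrt_pos.mpr hκ
  -- d * sqrt κ ≥ m ^ (1/L)
  have hκhalf : κ⁻¹ ^ ((1:ℝ)/2) * Real.sqrt κ = 1 := by
    rw [← Real.sqrt_eq_rpow, Real.sqrt_inv]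
    exact inv_mul_cancel₀ hsκ.ne'
  set A : ℝ := m ^ (1 / L) with hA
  have hA0 : 0 < A := Real.rpow_pos_of_pos hm0 _
  have hdA : A ≤ d * Real.sqrt κ := by
    calc A = A * (κ⁻¹ ^ ((1:ℝ)/2) * Real.sqrt κ) := by rw [hκhalf, mul_one]
      _ = (A * κ⁻¹ ^ ((1:ℝ)/2)) * Real.sqrt κ := by ring
      _ ≤ d * Real.sqrt κ := mul_le_mul_of_nonneg_right hd hsκ.le
  -- step: A ≥ 45 u
  set Λ : ℝ := Real.log (5 * u) with hΛ
  have h5u : (1:ℝ) < 5 * u := by linarith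
  have hΛ0 : 0 < Λ := Real.log_pos h5u
  have hkey : Λ * Real.log (45 * u) ≤ u := by
    have h45 : (0:ℝ) < 45 * u := by linarith
    have hlog45 : Real.log (45 * u) ≤ 4 * (45 * u) ^ ((1:ℝ)/4) := log_le_four_rpow h45
    have hmono : Λ ≤ Real.log (45 * u) := Real.log_le_log (by linarith) (by linarith)
    have hlogpos : 0 ≤ Real.log (45 * u) := by
      apply Real.log_nonneg; linarith
    have hsq : Λ * Real.log (45 * u) ≤ (Real.log (45 * u))^2 := by nlinarith
    have hr2 : (4 * (45 * u) ^ ((1:ℝ)/4))^2 = 16 * (45 * u) ^ ((1:ℝ)/2) := by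
      rw [mul_pow, ← Real.rpow_natCast ((45*u) ^ ((1:ℝ)/4)) 2, ← Real.rpow_mul h45.le]
      norm_num
    have hsqrt : (45 * u) ^ ((1:ℝ)/2) = Real.sqrt (45*u) := (Real.sqrt_eq_rpow _).symm
    have h7 : Real.sqrt (45 * u) ≤ 7 * Real.sqrt u := by
      calc Real.sqrt (45 * u) ≤ Real.sqrt (49 * u) := Real.sqrt_le_sqrt (by linarith)
        _ = 7 * Real.sqrt u := by
            rw [Real.sqrt_mul (by norm_num) u, show (49:ℝ) = 7^2 by norm_num,
              Real.sqrt_sq (by norm_num)]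
    have hsu : 112 ≤ Real.sqrt u := by
      calc (112:ℝ) = Real.sqrt (112^2) := by rw [Real.sqrt_sq]; norm_num
        _ ≤ Real.sqrt u := Real.sqrt_le_sqrt (by nlinarith)
    have huu : Real.sqrt u * Real.sqrt u = u := Real.mul_self_sqrt hu0.le
    have hfin : (Real.log (45 * u))^2 ≤ 112 * Real.sqrt u := by
      calc (Real.log (45 * u))^2 ≤ (4 * (45 * u) ^ ((1:ℝ)/4))^2 :=
            pow_le_pow_left₀ hlogpos hlog45 2
        _ = 16 * (45 * u) ^ ((1:ℝ)/2) := hr2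
        _ = 16 * Real.sqrt (45 * u) := by rw [hsqrt]
        _ ≤ 16 * (7 * Real.sqrt u) := by
            apply mul_le_mul_of_nonneg_left h7 (by norm_num)
        _ = 112 * Real.sqrt u := by ring
    calc Λ * Real.log (45 * u) ≤ (Real.log (45 * u))^2 := hsq
      _ ≤ 112 * Real.sqrt u := hfin
      _ ≤ Real.sqrt u * Real.sqrt u :=
          mul_le_mul_of_nonneg_right hsu (Real.sqrt_nonneg u)
      _ = u := huu
  have hA45 : 45 * u ≤ A := by
    have h45 : (0:ℝ) < 45 * u := by linarith
    have h1 : Real.log (45 * u) ≤ u / Λ := by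
      rw [le_div_iff₀ hΛ0, mul_comm]; exact hkey
    have h2 : u / Λ ≤ u / L := by
      apply div_le_div_of_nonneg_left hu0.le hL0 hL2
    calc 45 * u = Real.exp (Real.log (45 * u)) := (Real.exp_log h45).symm
      _ ≤ Real.exp (u / L) := Real.exp_le_exp.mpr (h1.trans h2)
      _ = A := by rw [hA, Real.rpow_def_of_pos hm0, ← hu]; ring_nf
  -- conclude
  have hbound : Gx ≤ 8 * m * Real.exp (-(A/3)) := by
    refine hGx.trans ?_
    have e1 : 15 / (2 * κ) ≤ 8 * m := by
      rw [div_le_iff₀ (by positivity)]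
      have : κ⁻¹ ≤ m := hκm
      have hκm' : 1 ≤ κ * m := by
        rw [← inv_inv κ, inv_mul_eq_div, le_div_iff₀ (by positivity)]
        rwa [one_mul]
      nlinarith
    have e2 : Real.exp (-(Real.sqrt κ / 3) * d) ≤ Real.exp (-(A/3)) := by
      apply Real.exp_le_exp.mpr
      nlinarith
    calc 15 / (2 * κ) * Real.exp (-(Real.sqrt κ / 3) * d)
        ≤ (8 * m) * Real.exp (-(Real.sqrt κ / 3) * d) := by
          apply mul_le_mul_of_nonneg_right e1 (Real.exp_pos _).le
      _ ≤ (8 * m) * Real.exp (-(A/3)) := by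
          apply mul_le_mul_of_nonneg_left e2 (by positivity)
  refine hbound.trans ?_
  rw [Real.rpow_def_of_pos hm0]
  have hlog8 : Real.log 8 ≤ 7 := by
    have h := Real.log_le_sub_one_of_pos (show (0:ℝ) < 8 by norm_num)
    norm_num at h
    linarith
  have h8m : 8 * m * Real.exp (-(A/3)) = Real.exp (Real.log 8 + u - A/3) := by
    rw [Real.exp_sub, Real.exp_add, Real.exp_log (by norm_num : (0:ℝ) < 8), hu,
      Real.exp_log hm0, Real.exp_neg]
    ring
  rw [h8m]
  apply Real.exp_le_exp.mpr
  have hq : u / (2 * L) ≤ 13 * u := by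
    rw [div_le_iff₀ (by linarith)]
    nlinarith
  have : u * -(1 / (2 * L)) = -(u / (2 * L)) := by ring
  rw [this]
  linarith
end Stmt12Aux

open Stmt12Aux in
/-- Proposition 3.7: for `m` large, `e⁹ ≤ κ⁻¹ ≤ m` and
`|x| ≥ m^{1/log G^{o,o}} κ^{-1/2}`, one has `G^{o,x} ≤ m^{-1/(2 log G^{o,o})}`. -/
theorem stmt12 :
    ∃ m₀ : ℝ, ∀ m : ℝ, m₀ ≤ m → ∀ κ : ℝ, 0 < κ →
      Real.exp 9 ≤ κ⁻¹ → κ⁻¹ ≤ m →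
      ∀ x : ℤ × ℤ,
        m ^ (1 / Real.log (G κ (0, 0))) * κ⁻¹ ^ ((1 : ℝ) / 2) ≤ (gnorm x : ℝ) →
        G κ x ≤ m ^ (-(1 / (2 * Real.log (G κ (0, 0))))) := by
  refine ⟨Real.exp 12544, ?_⟩
  intro m hm κ hκ hκ9 hκm x hx
  have hκ1 : κ ≤ 1 := kappa_le_one hκ hκ9
  have hGlow : 26/25 ≤ G κ (0,0) := G_lower hκ hκ1
  have hGpos : 0 < G κ (0,0) := by linarith
  have hL1 : 1/26 ≤ Real.log (G κ (0,0)) := by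
    have he : Real.exp (1/26) ≤ 26/25 := by
      have h := Real.add_one_le_exp (-(1/26) : ℝ)
      have h2 : (25/26 : ℝ) ≤ Real.exp (-(1/26)) := by linarith
      rw [show (1/26 : ℝ) = -(-(1/26)) by ring, Real.exp_neg]
      rw [show (26/25 : ℝ) = (25/26 : ℝ)⁻¹ by norm_num]
      exact inv_anti₀ (by norm_num) h2
    calc (1/26 : ℝ) = Real.log (Real.exp (1/26)) := (Real.log_exp _).symm
      _ ≤ Real.log (26/25) := Real.log_le_log (Real.exp_pos _) he
      _ ≤ Real.log (G κ (0,0)) := Real.log_le_log (by norm_num) hGlow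
  have hL2 : Real.log (G κ (0,0)) ≤ Real.log (5 * Real.log m) := by
    have hup : G κ (0,0) ≤ 5 * Real.log κ⁻¹ := G_upper hκ hκ9
    have hκinv : 0 < κ⁻¹ := by positivity
    have hlogm : Real.log κ⁻¹ ≤ Real.log m := Real.log_le_log hκinv hκm
    exact Real.log_le_log hGpos (by linarith)
  exact main_arith hm hκ hκ9 hκm hL1 hL2 (G_decay hκ x hκ1) hx
end

section
/- Let κ > 0 be a killing rate with κ^{−1} > e^{30}, let 0 < ε < 1, let m ≥ 2 be a real number, and set u* := (log m)/(log G^{o,o}). Then for every x ∈ ℤ² with |x| ≥ 2κ^{−1}, ((G^{o,o})² − (G^{o,x})²)^{−(1−ε)u*} ≤ m^{−(1−ε)} · ((log κ^{−1})/(2π))^{−(1−ε)u*}. -/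
open scoped Real

/-- number of ±1 sequences of length n with sum p -/
noncomputable def cnt (n : ℕ) (p : ℤ) : ℕ :=
  Nat.card {σ : Fin n → ℤ // (∀ i, σ i = 1 ∨ σ i = -1) ∧ ∑ i, σ i = p}

lemma sum_pm {n : ℕ} (σ : Fin n → ℤ) (h : ∀ i, σ i = 1 ∨ σ i = -1) :
    ∑ i, σ i = 2 * (Finset.univ.filter (fun i => σ i = 1)).card - n := by
  classical
  rw [← Finset.sum_filter_add_sum_filter_not Finset.univ (fun i => σ i = 1)]
  have h1 : ∑ i ∈ Finset.univ.filter (fun i => σ i = 1), σ i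
      = (Finset.univ.filter (fun i => σ i = 1)).card := by
    rw [Finset.sum_congr rfl (fun i hi => (Finset.mem_filter.mp hi).2)]
    simp
  have h2 : ∑ i ∈ Finset.univ.filter (fun i => ¬ σ i = 1), σ i
      = -((Finset.univ.filter (fun i => ¬ σ i = 1)).card) := by
    rw [Finset.sum_congr rfl (fun i hi => ((h i).resolve_left (Finset.mem_filter.mp hi).2))]
    simp
  rw [h1, h2]
  have h3 := Finset.card_filter_add_card_filter_not (s := Finset.univ)
    (p := fun i : Fin n => σ i = 1)
  simp only [Finset.card_univ, Fintype.card_fin] at h3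
  have : ((Finset.univ.filter (fun i => ¬ σ i = 1)).card : ℤ)
      = (n : ℤ) - (Finset.univ.filter (fun i => σ i = 1)).card := by
    omega
  rw [this]; ring

lemma cnt_eq_choose (n m : ℕ) (p : ℤ) (h : (n : ℤ) + p = 2 * m) (hm : m ≤ n) :
    cnt n p = n.choose m := by
  classical
  have e : {σ : Fin n → ℤ // (∀ i, σ i = 1 ∨ σ i = -1) ∧ ∑ i, σ i = p}
      ≃ {T : Finset (Fin n) // T.card = m} := by
    refine
    { toFun := fun σ => ⟨Finset.univ.filter (fun i => σ.1 i = 1), ?_⟩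
      invFun := fun T => ⟨fun i => if i ∈ T.1 then 1 else -1, ?_, ?_⟩
      left_inv := ?_
      right_inv := ?_ }
    · have := sum_pm σ.1 σ.2.1
      rw [σ.2.2] at this
      have hc : ((Finset.univ.filter (fun i => σ.1 i = 1)).card : ℤ) = m := by omega
      exact_mod_cast hc
    · intro i; by_cases hi : i ∈ T.1 <;> simp [hi]
    · have : ∀ i, (if i ∈ T.1 then (1:ℤ) else -1) = 1 ∨ (if i ∈ T.1 then (1:ℤ) else -1) = -1 :=
        fun i => by by_cases hi : i ∈ T.1 <;> simp [hi]
      rw [sum_pm _ this]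
      have : Finset.univ.filter (fun i => (if i ∈ T.1 then (1:ℤ) else -1) = 1) = T.1 := by
        ext i; by_cases hi : i ∈ T.1 <;> simp [hi]
      rw [this, T.2]; omega
    · rintro ⟨σ, hσ1, hσ2⟩
      ext i
      simp only
      by_cases hi : σ i = 1
      · simp [hi]
      · simp [hi, (hσ1 i).resolve_left hi]
    · rintro ⟨T, hT⟩
      ext i
      simp
  rw [cnt, Nat.card_congr e, Nat.card_eq_fintype_card, Fintype.card_finset_len,
    Fintype.card_fin]

lemma cnt_eq_zero {n : ℕ} {p : ℤ} (h : (n : ℤ) < |p| ∨ ¬ (2 ∣ (n + p))) : cnt n p = 0 := by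
  classical
  rw [cnt, Nat.card_eq_zero]
  left
  constructor
  rintro ⟨σ, hσ1, hσ2⟩
  have := sum_pm σ hσ1
  rw [hσ2] at this
  have hle : (Finset.univ.filter (fun i => σ i = 1)).card ≤ n := by
    simpa using Finset.card_filter_le Finset.univ (fun i => σ i = 1)
  have : p = 2 * ((Finset.univ.filter (fun i => σ i = 1)).card : ℤ) - n := this
  rcases h with h | h
  · rcases abs_cases p with ⟨he, _⟩ | ⟨he, _⟩ <;> omega
  · omega

lemma cnt_le (n : ℕ) (p : ℤ) : cnt n p ≤ 2 ^ n := by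
  classical
  have : cnt n p ≤ Nat.card (Fin n → Bool) := by
    apply Nat.card_le_card_of_injective
      (f := fun σ : {σ : Fin n → ℤ // (∀ i, σ i = 1 ∨ σ i = -1) ∧ ∑ i, σ i = p} =>
        (fun i => decide (σ.1 i = 1) : Fin n → Bool))
    rintro ⟨σ, hσ1, hσ2⟩ ⟨τ, hτ1, hτ2⟩ h
    simp only [Subtype.mk.injEq] at h ⊢
    funext i
    have := congrFun h i
    simp only [decide_eq_decide] at this
    rcases hσ1 i with h1 | h1 <;> rcases hτ1 i with h2 | h2 <;> simp [h1, h2] at this ⊢ <;> omega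
  simpa [Nat.card_eq_fintype_card] using this

section walkequiv
variable (n : ℕ) (x : ℤ × ℤ)

/-- extension of a step sequence to ℕ -/
noncomputable def ext (s : Fin n → ℤ × ℤ) : ℕ → ℤ × ℤ :=
  fun i => if h : i < n then s ⟨i, h⟩ else 0

/-- extension of a walk to ℕ -/
noncomputable def vext (v : Fin (n + 1) → ℤ × ℤ) : ℕ → ℤ × ℤ :=
  fun j => v ⟨min j n, by omega⟩

lemma vext_sum (v : Fin (n + 1) → ℤ × ℤ) :
    ∑ i : Fin n, (v i.succ - v i.castSucc) = v (Fin.last n) - v 0 := by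
  have h1 : ∑ i : Fin n, (v i.succ - v i.castSucc)
      = ∑ i ∈ Finset.range n, (vext n v (i + 1) - vext n v i) := by
    rw [← Fin.sum_univ_eq_sum_range]
    apply Finset.sum_congr rfl
    intro i _
    congr 1 <;> apply congrArg <;> apply Fin.ext <;> simp [Fin.ext_iff] <;> omega
  rw [h1, Finset.sum_range_sub (vext n v)]
  have e1 : vext n v n = v (Fin.last n) := by
    unfold vext; congr 1; exact Fin.ext (by simp [Fin.last])
  have e2 : vext n v 0 = v 0 := by
    unfold vext; congr 1
  rw [e1, e2]

noncomputable def walkEquivSteps :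
    {v : Fin (n + 1) → ℤ × ℤ // v 0 = (0, 0) ∧ v (Fin.last n) = x ∧
      ∀ i : Fin n, gnorm (v i.succ - v i.castSucc) = 1}
    ≃ {s : Fin n → ℤ × ℤ // (∀ i, gnorm (s i) = 1) ∧ ∑ i, s i = x} where
  toFun v := ⟨fun i => v.1 i.succ - v.1 i.castSucc, v.2.2.2, by
    rw [vext_sum, v.2.2.1, v.2.1]
    simp⟩
  invFun s := ⟨fun j => ∑ i ∈ Finset.range j.1, ext n s.1 i, by simp; rfl, by
    obtain ⟨s, hs1, hs2⟩ := s
    simp only [Fin.last]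
    rw [← hs2, ← Fin.sum_univ_eq_sum_range]
    apply Finset.sum_congr rfl
    intro i _
    simp [ext], by
    obtain ⟨s, hs1, hs2⟩ := s
    intro i
    simp only [Fin.succ, Fin.castSucc, Fin.castAdd, Fin.castLE]
    rw [Finset.sum_range_succ]
    simp only [add_sub_cancel_left]
    have : ext n s i.1 = s i := by simp [ext, i.2]
    rw [this]
    exact hs1 i⟩
  left_inv := by
    rintro ⟨v, hv0, hvl, hvs⟩
    apply Subtype.ext
    funext j
    simp only
    have key : ∀ jv : ℕ, (hj : jv ≤ n) → ∑ i ∈ Finset.range jv,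
        ext n (fun i : Fin n => v i.succ - v i.castSucc) i = v ⟨jv, by omega⟩ := by
      intro jv hj
      induction jv with
      | zero =>
        simp only [Finset.range_zero, Finset.sum_empty]
        rw [show (⟨0, by omega⟩ : Fin (n+1)) = 0 from rfl, hv0]
        rfl
      | succ jv ih =>
        rw [Finset.sum_range_succ, ih (by omega)]
        have : ext n (fun i : Fin n => v i.succ - v i.castSucc) jv
            = v ⟨jv+1, by omega⟩ - v ⟨jv, by omega⟩ := by
          simp only [ext, dif_pos (show jv < n by omega)]
          rfl
        rw [this]
        abel
    rw [key j.1 (by omega)]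
  right_inv := by
    rintro ⟨s, hs1, hs2⟩
    apply Subtype.ext
    funext i
    simp only [Fin.succ, Fin.castSucc, Fin.castAdd, Fin.castLE]
    rw [Finset.sum_range_succ]
    simp only [add_sub_cancel_left]
    simp [ext, i.2]

end walkequiv

section stepequiv
variable (n : ℕ) (x : ℤ × ℤ)

/-- decode a pair of signs into a unit step -/
def dec (u v : ℤ) : ℤ × ℤ :=
  if u = 1 then (if v = 1 then (1, 0) else (0, 1))
  else (if v = 1 then (0, -1) else (-1, 0))

lemma dec_spec {u v : ℤ} (hu : u = 1 ∨ u = -1) (hv : v = 1 ∨ v = -1) :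
    gnorm (dec u v) = 1 ∧ (dec u v).1 + (dec u v).2 = u ∧ (dec u v).1 - (dec u v).2 = v := by
  rcases hu with h1 | h1 <;> rcases hv with h2 | h2 <;> simp [dec, h1, h2, gnorm]

lemma dec_eq {s : ℤ × ℤ} (h : gnorm s = 1) : dec (s.1 + s.2) (s.1 - s.2) = s := by
  obtain ⟨a, b⟩ := s
  simp only [gnorm] at h
  simp only
  have : (a = 1 ∧ b = 0) ∨ (a = -1 ∧ b = 0) ∨ (a = 0 ∧ b = 1) ∨ (a = 0 ∧ b = -1) := by omega
  rcases this with ⟨h1, h2⟩ | ⟨h1, h2⟩ | ⟨h1, h2⟩ | ⟨h1, h2⟩ <;> subst h1 <;> subst h2 <;>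
    simp [dec]

lemma gnorm_pm {s : ℤ × ℤ} (h : gnorm s = 1) :
    (s.1 + s.2 = 1 ∨ s.1 + s.2 = -1) ∧ (s.1 - s.2 = 1 ∨ s.1 - s.2 = -1) := by
  obtain ⟨a, b⟩ := s
  simp only [gnorm] at h
  simp only
  omega

noncomputable def stepsEquivSigns :
    {s : Fin n → ℤ × ℤ // (∀ i, gnorm (s i) = 1) ∧ ∑ i, s i = x}
    ≃ {στ : (Fin n → ℤ) × (Fin n → ℤ) //
        ((∀ i, στ.1 i = 1 ∨ στ.1 i = -1) ∧ ∑ i, στ.1 i = x.1 + x.2) ∧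
        ((∀ i, στ.2 i = 1 ∨ στ.2 i = -1) ∧ ∑ i, στ.2 i = x.1 - x.2)} where
  toFun s := ⟨(fun i => (s.1 i).1 + (s.1 i).2, fun i => (s.1 i).1 - (s.1 i).2),
    ⟨⟨fun i => (gnorm_pm (s.2.1 i)).1, by
      obtain ⟨s, hs1, hs2⟩ := s
      simp only
      rw [Finset.sum_add_distrib, ← Prod.fst_sum, ← Prod.snd_sum, hs2]⟩,
     ⟨fun i => (gnorm_pm (s.2.1 i)).2, by
      obtain ⟨s, hs1, hs2⟩ := s
      simp only
      rw [Finset.sum_sub_distrib, ← Prod.fst_sum, ← Prod.snd_sum, hs2]⟩⟩⟩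
  invFun στ := ⟨fun i => dec (στ.1.1 i) (στ.1.2 i),
    fun i => (dec_spec (στ.2.1.1 i) (στ.2.2.1 i)).1, by
      obtain ⟨⟨σ, τ⟩, ⟨hσ1, hσ2⟩, ⟨hτ1, hτ2⟩⟩ := στ
      simp only
      have h1 : ∑ i : Fin n, ((dec (σ i) (τ i)).1 + (dec (σ i) (τ i)).2) = x.1 + x.2 := by
        rw [Finset.sum_congr rfl (fun i _ => (dec_spec (hσ1 i) (hτ1 i)).2.1), hσ2]
      have h2 : ∑ i : Fin n, ((dec (σ i) (τ i)).1 - (dec (σ i) (τ i)).2) = x.1 - x.2 := by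
        rw [Finset.sum_congr rfl (fun i _ => (dec_spec (hσ1 i) (hτ1 i)).2.2), hτ2]
      rw [Finset.sum_add_distrib, ← Prod.fst_sum, ← Prod.snd_sum] at h1
      rw [Finset.sum_sub_distrib, ← Prod.fst_sum, ← Prod.snd_sum] at h2
      apply Prod.ext <;> omega⟩
  left_inv := by
    rintro ⟨s, hs1, hs2⟩
    apply Subtype.ext
    funext i
    exact dec_eq (hs1 i)
  right_inv := by
    rintro ⟨⟨σ, τ⟩, ⟨hσ1, hσ2⟩, ⟨hτ1, hτ2⟩⟩
    apply Subtype.ext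
    apply Prod.ext <;> funext i
    · exact (dec_spec (hσ1 i) (hτ1 i)).2.1
    · exact (dec_spec (hσ1 i) (hτ1 i)).2.2

end stepequiv

lemma W_eq (n : ℕ) (x : ℤ × ℤ) : W n x = cnt n (x.1 + x.2) * cnt n (x.1 - x.2) := by
  rw [W, ← Nat.card_coe_set_eq]
  have e := ((walkEquivSteps n x).trans (stepsEquivSigns n x)).trans
    (Equiv.subtypeProdEquivProd
      (p := fun σ : Fin n → ℤ => (∀ i, σ i = 1 ∨ σ i = -1) ∧ ∑ i, σ i = x.1 + x.2)
      (q := fun τ : Fin n → ℤ => (∀ i, τ i = 1 ∨ τ i = -1) ∧ ∑ i, τ i = x.1 - x.2))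
  exact (Nat.card_congr e).trans (by rw [Nat.card_prod]; rfl)

lemma exp_le_one_add {u : ℝ} (hu : 0 ≤ u) : Real.exp (u / (1 + u)) ≤ 1 + u := by
  have h1 : (0:ℝ) < 1 + u := by linarith
  have h2 : 1 / (1 + u) ≤ Real.exp (-(u / (1 + u))) := by
    have := Real.add_one_le_exp (-(u / (1 + u)))
    have h3 : 1 - u / (1 + u) = 1 / (1 + u) := by field_simp; ring
    linarith
  have h4 := mul_le_mul_of_nonneg_left h2 (Real.exp_pos (u / (1 + u))).le
  rw [← Real.exp_add, add_neg_cancel, Real.exp_zero] at h4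
  rw [mul_one_div, div_le_one h1] at h4
  exact h4

lemma chernoff (n m k : ℕ) (hn : 1 ≤ n) (hmk : 2 * m = n + k) (hkn : k ≤ n) :
    (n.choose m : ℝ) ≤ 2 ^ n * Real.exp (-(k : ℝ) ^ 2 / (18 * n)) := by
  obtain ⟨N, hN⟩ : ∃ N : ℝ, N = (n : ℝ) := ⟨_, rfl⟩
  obtain ⟨K, hK⟩ : ∃ K : ℝ, K = (k : ℝ) := ⟨_, rfl⟩
  obtain ⟨M, hM⟩ : ∃ M : ℝ, M = (m : ℝ) := ⟨_, rfl⟩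
  obtain ⟨u, hu⟩ : ∃ u : ℝ, u = K / (3 * N) := ⟨_, rfl⟩
  have hN1 : (1:ℝ) ≤ N := by rw [hN]; exact_mod_cast hn
  have hN0 : (0:ℝ) < N := by linarith
  have hK0 : (0:ℝ) ≤ K := by rw [hK]; exact Nat.cast_nonneg k
  have hMNK : 2 * M = N + K := by rw [hM, hN, hK]; exact_mod_cast hmk
  have hKN : K ≤ N := by rw [hK, hN]; exact_mod_cast hkn
  have hu0 : 0 ≤ u := by rw [hu]; positivity
  have hu1 : (0:ℝ) < 1 + u := by linarith
  rw [show -(k:ℝ)^2/(18*(n:ℝ)) = -K^2/(18*N) by rw [hK, hN]]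
  have step1 : (n.choose m : ℝ) * (1 + u) ^ m ≤ (2 + u) ^ n := by
    have expand : (2 + u) ^ n
        = ∑ j ∈ Finset.range (n + 1), (1+u) ^ j * 1 ^ (n - j) * n.choose j := by
      rw [show (2 : ℝ) + u = (1 + u) + 1 by ring, add_pow]
    rw [expand]
    have hmem : m ∈ Finset.range (n + 1) := Finset.mem_range.mpr (by omega)
    have := Finset.single_le_sum (f := fun j => (1+u) ^ j * 1 ^ (n - j) * (n.choose j : ℝ))
      (fun j _ => by positivity) hmem
    calc (n.choose m : ℝ) * (1 + u) ^ m
        = (1+u) ^ m * 1 ^ (n - m) * (n.choose m : ℝ) := by ring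
    _ ≤ _ := this
  have step2 : (2 + u) ^ n ≤ 2 ^ n * Real.exp (N * u / 2) := by
    have h1 : (2 : ℝ) + u ≤ 2 * Real.exp (u / 2) := by
      have := Real.add_one_le_exp (u / 2)
      nlinarith
    calc (2 + u) ^ n ≤ (2 * Real.exp (u / 2)) ^ n := pow_le_pow_left₀ (by linarith) h1 n
    _ = 2 ^ n * Real.exp (u / 2) ^ n := by rw [mul_pow]
    _ = 2 ^ n * Real.exp (N * u / 2) := by
        rw [← Real.exp_nat_mul, hN]; ring_nf
  have step3 : Real.exp (M * (u / (1 + u))) ≤ (1 + u) ^ m := by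
    calc Real.exp (M * (u / (1 + u))) = Real.exp (u / (1+u)) ^ m := by
          rw [← Real.exp_nat_mul, hM]
    _ ≤ (1 + u) ^ m := pow_le_pow_left₀ (Real.exp_pos _).le (exp_le_one_add hu0) m
  have step4 : N * u / 2 - M * (u / (1 + u)) ≤ -K ^ 2 / (18 * N) := by
    have hM0 : 0 ≤ M := by nlinarith
    have hfr : u - u ^ 2 ≤ u / (1 + u) := by
      rw [le_div_iff₀ hu1]; nlinarith [pow_nonneg hu0 3]
    have h5 : M * (u - u ^ 2) ≤ M * (u / (1 + u)) := mul_le_mul_of_nonneg_left hfr hM0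
    have hMN : M ≤ N := by nlinarith
    have h6 : N * u / 2 - M * (u - u ^ 2) ≤ N * u / 2 - M * u + N * u ^ 2 := by nlinarith
    have h7 : N * u / 2 - M * u + N * u ^ 2 = -K ^ 2 / (18 * N) := by
      have hMval : M = (N + K) / 2 := by linarith
      rw [hMval, hu]
      field_simp
      ring
    linarith
  have h8 : (n.choose m : ℝ) * Real.exp (M * (u / (1 + u))) ≤ 2 ^ n * Real.exp (N * u / 2) :=
    le_trans (mul_le_mul_of_nonneg_left step3 (Nat.cast_nonneg _)) (step1.trans step2)
  have h9 : (n.choose m : ℝ) ≤ 2 ^ n * Real.exp (N * u / 2 - M * (u / (1 + u))) := by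
    rw [Real.exp_sub, ← mul_div_assoc, le_div_iff₀ (Real.exp_pos _)]
    exact h8
  exact h9.trans (mul_le_mul_of_nonneg_left (Real.exp_le_exp.mpr step4) (by positivity))

lemma W_le_four_pow (n : ℕ) (x : ℤ × ℤ) : W n x ≤ 4 ^ n := by
  rw [W_eq]
  calc cnt n (x.1 + x.2) * cnt n (x.1 - x.2) ≤ 2 ^ n * 2 ^ n :=
    Nat.mul_le_mul (cnt_le _ _) (cnt_le _ _)
  _ = 4 ^ n := by norm_num [← mul_pow]

lemma summable_term {κ : ℝ} (hκ : 0 < κ) (x : ℤ × ℤ) :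
    Summable (fun n : ℕ => (1 / (4 + κ)) ^ n * (W n x : ℝ)) := by
  have h2 : (0:ℝ) < 4 + κ := by linarith
  have hgeo : Summable (fun n : ℕ => (4 / (4 + κ)) ^ n) := by
    apply summable_geometric_of_lt_one (by positivity)
    rw [div_lt_one (by linarith)]; linarith
  refine hgeo.of_nonneg_of_le (fun n => by positivity) (fun n => ?_)
  · have h1 : (W n x : ℝ) ≤ (4 : ℝ) ^ n := by exact_mod_cast W_le_four_pow n x
    calc (1 / (4 + κ)) ^ n * (W n x : ℝ) ≤ (1 / (4 + κ)) ^ n * 4 ^ n := by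
          apply mul_le_mul_of_nonneg_left h1 (by positivity)
    _ = (4 / (4 + κ)) ^ n := by rw [← mul_pow]; ring_nf

lemma G_nonneg {κ : ℝ} (hκ : 0 < κ) (x : ℤ × ℤ) : 0 ≤ G κ x := by
  have h2 : (0:ℝ) < 4 + κ := by linarith
  exact tsum_nonneg (fun n => by positivity)

/-- key structural dichotomy for W -/
lemma W_cases (n : ℕ) (x : ℤ × ℤ) :
    W n x = 0 ∨ ∃ m : ℕ, 2 * m = n + gnorm x ∧ gnorm x ≤ n ∧
      W n x ≤ 2 ^ n * n.choose m := by
  classical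
  set k := gnorm x with hk
  set p := x.1 + x.2 with hp
  set q := x.1 - x.2 with hq
  have habs : (p.natAbs = k ∧ q.natAbs ≤ k) ∨ (q.natAbs = k ∧ p.natAbs ≤ k) := by
    simp only [hp, hq, hk, gnorm]; omega
  have hpar : (2 : ℤ) ∣ (p - k) := by simp only [hp, hk, gnorm]; omega
  by_cases hn : n < k ∨ ¬ (2 ∣ (n + k))
  · left
    rw [W_eq]
    rcases habs with ⟨h1, _⟩ | ⟨h1, _⟩
    · have : cnt n p = 0 := by
        apply cnt_eq_zero
        rcases hn with hn | hn
        · left; rw [Int.abs_eq_natAbs, h1]; exact_mod_cast hn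
        · right; intro hdvd
          rcases hpar with ⟨c, hc⟩
          rcases hdvd with ⟨d, hd⟩
          omega
      rw [this, zero_mul]
    · have : cnt n q = 0 := by
        apply cnt_eq_zero
        have hpar' : (2 : ℤ) ∣ (q - k) := by simp only [hq, hk, gnorm]; omega
        rcases hn with hn | hn
        · left; rw [Int.abs_eq_natAbs, h1]; exact_mod_cast hn
        · right; intro hdvd
          rcases hpar' with ⟨c, hc⟩
          rcases hdvd with ⟨d, hd⟩
          omega
      rw [this, mul_zero]
  · right
    push_neg at hn
    obtain ⟨hkn, hdvd⟩ := hn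
    obtain ⟨m', hm'⟩ := hdvd
    refine ⟨m', by omega, hkn, ?_⟩
    have hm'n : m' ≤ n := by omega
    have key : ∀ r : ℤ, r.natAbs = k → cnt n r = n.choose m' := by
      intro r hr
      have : r = (k : ℤ) ∨ r = -(k : ℤ) := by
        rcases Int.natAbs_eq r with h | h <;> [left; right] <;> omega
      rcases this with h | h
      · exact cnt_eq_choose n m' r (by omega) hm'n
      · rw [cnt_eq_choose n (n - m') r (by omega) (by omega)]
        rw [Nat.choose_symm hm'n]
    rw [W_eq]
    rcases habs with ⟨h1, _⟩ | ⟨h1, _⟩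
    · rw [key p h1]
      calc n.choose m' * cnt n q ≤ n.choose m' * 2 ^ n :=
        Nat.mul_le_mul_left _ (cnt_le _ _)
      _ = 2 ^ n * n.choose m' := Nat.mul_comm _ _
    · rw [key q h1]
      exact Nat.mul_le_mul (cnt_le _ _) le_rfl

lemma cube_le_exp {x : ℝ} (hx : 0 ≤ x) : x ^ 3 / 6 ≤ Real.exp x := by
  have h := Real.sum_le_exp_of_nonneg hx 4
  have he : ∑ i ∈ Finset.range 4, x ^ i / (Nat.factorial i)
      = 1 + x + x ^ 2 / 2 + x ^ 3 / 6 := by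
    rw [Finset.sum_range_succ, Finset.sum_range_succ, Finset.sum_range_succ,
      Finset.sum_range_one]
    norm_num [Nat.factorial]
  rw [he] at h
  nlinarith [sq_nonneg x]

set_option maxHeartbeats 2000000 in
lemma Gx_le_one {κ : ℝ} (hκ : 0 < κ) (hκ' : Real.exp 30 < κ⁻¹)
    (x : ℤ × ℤ) (hx : 2 * κ⁻¹ ≤ (gnorm x : ℝ)) : G κ x ≤ 1 := by
  have hκ30 : κ < Real.exp (-30) := by
    rw [← inv_inv κ, Real.exp_neg]
    exact inv_strictAnti₀ (Real.exp_pos _) hκ'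
  have hκ1 : κ < 1 := by
    have h1 : Real.exp (-30) < 1 := Real.exp_lt_one_iff.mpr (by norm_num)
    linarith
  have h4κ : (0:ℝ) < 4 + κ := by linarith
  set K : ℝ := (gnorm x : ℝ) with hK
  have hK2 : 2 / κ ≤ K := by
    rw [div_eq_mul_inv]; exact hx
  have hK0 : 0 < K := lt_of_lt_of_le (by positivity) hK2
  have hk1 : 1 ≤ gnorm x := by
    rcases Nat.eq_zero_or_pos (gnorm x) with h | h
    · rw [hK, h] at hK0; norm_num at hK0
    · exact h
  set s : ℝ := Real.sqrt κ with hs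
  have hs0 : 0 < s := Real.sqrt_pos.mpr hκ
  have hκs : κ = s ^ 2 := (Real.sq_sqrt hκ.le).symm
  set C : ℝ := Real.exp (-(K * s) / 8) with hC
  set r : ℝ := Real.exp (-(κ / 10)) with hr
  have hr0 : 0 < r := Real.exp_pos _
  have hr1 : r < 1 := Real.exp_lt_one_iff.mpr (by linarith)
  -- per-term bound
  have hterm : ∀ n : ℕ, (1 / (4 + κ)) ^ n * (W n x : ℝ) ≤ C * r ^ n := by
    intro n
    rcases W_cases n x with h0 | ⟨m, hm, hkn, hWle⟩
    · rw [h0]; simp only [Nat.cast_zero, mul_zero]; positivity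
    · have hn1 : 1 ≤ n := le_trans hk1 hkn
      have hN1 : (1:ℝ) ≤ (n:ℝ) := by exact_mod_cast hn1
      have hN0 : (0:ℝ) < (n:ℝ) := by linarith
      have hch := chernoff n m (gnorm x) hn1 hm hkn
      have hW : (W n x : ℝ) ≤ 2 ^ n * (n.choose m : ℝ) := by exact_mod_cast hWle
      have h1 : (1 / (4 + κ)) ^ n * (W n x : ℝ)
          ≤ (4 / (4 + κ)) ^ n * Real.exp (-K ^ 2 / (18 * n)) := by
        calc (1 / (4 + κ)) ^ n * (W n x : ℝ)
            ≤ (1 / (4 + κ)) ^ n * (2 ^ n * (2 ^ n * Real.exp (-K ^ 2 / (18 * n)))) := by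
              apply mul_le_mul_of_nonneg_left _ (by positivity)
              exact hW.trans (mul_le_mul_of_nonneg_left hch (by positivity))
        _ = (4 / (4 + κ)) ^ n * Real.exp (-K ^ 2 / (18 * n)) := by
              rw [show (4:ℝ) / (4 + κ) = 1 / (4 + κ) * 2 * 2 by ring, mul_pow, mul_pow]
              ring
      have h2 : (4 / (4 + κ)) ^ n ≤ Real.exp (-(κ / 5)) ^ n := by
        apply pow_le_pow_left₀ (by positivity)
        have ha := Real.add_one_le_exp (-(κ / 5))
        rw [div_le_iff₀ h4κ]
        nlinarith
      have h3 : Real.exp (-(κ / 5)) ^ n * Real.exp (-K ^ 2 / (18 * n))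
          = Real.exp (-((n:ℝ) * κ / 5) - K ^ 2 / (18 * n)) := by
        rw [← Real.exp_nat_mul, ← Real.exp_add]
        ring_nf
      have claim : K * s / 8 ≤ (n:ℝ) * κ / 10 + K ^ 2 / (18 * (n:ℝ)) := by
        rw [← sub_nonneg]
        have expand : (n:ℝ) * κ / 10 + K ^ 2 / (18 * (n:ℝ)) - K * s / 8
            = (72 * ((n:ℝ) * s) ^ 2 + 40 * K ^ 2 - 90 * ((n:ℝ) * s) * K) / (720 * (n:ℝ)) := by
          rw [hκs]; field_simp; ring
        rw [expand]
        apply div_nonneg _ (by positivity)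
        nlinarith [sq_nonneg (8 * ((n:ℝ) * s) - (45/8) * K), sq_nonneg ((n:ℝ) * s)]
      have h5 : -((n:ℝ) * κ / 5) - K ^ 2 / (18 * n) ≤ -(K * s) / 8 + (n:ℝ) * (-(κ / 10)) := by
        have heq : (n:ℝ) * κ / 5 = (n:ℝ) * κ / 10 + (n:ℝ) * κ / 10 := by ring
        nlinarith [claim]
      calc (1 / (4 + κ)) ^ n * (W n x : ℝ)
          ≤ Real.exp (-(κ / 5)) ^ n * Real.exp (-K ^ 2 / (18 * n)) :=
            h1.trans (mul_le_mul_of_nonneg_right h2 (Real.exp_pos _).le)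
      _ = Real.exp (-((n:ℝ) * κ / 5) - K ^ 2 / (18 * n)) := h3
      _ ≤ Real.exp (-(K * s) / 8 + (n:ℝ) * (-(κ / 10))) := Real.exp_le_exp.mpr h5
      _ = C * r ^ n := by rw [Real.exp_add, hC, hr, ← Real.exp_nat_mul]
  -- sum up
  have hsum : G κ x ≤ C / (1 - r) := by
    rw [G]
    have hgeo : Summable (fun n : ℕ => C * r ^ n) :=
      (summable_geometric_of_lt_one hr0.le hr1).mul_left C
    calc (∑' n : ℕ, (1 / (4 + κ)) ^ n * (W n x : ℝ)) ≤ ∑' n : ℕ, C * r ^ n :=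
          Summable.tsum_le_tsum hterm (summable_term hκ x) hgeo
    _ = C * (1 - r)⁻¹ := by rw [tsum_mul_left, tsum_geometric_of_lt_one hr0.le hr1]
    _ = C / (1 - r) := by rw [div_eq_mul_inv]
  -- final numerics
  have h1r : κ / 20 ≤ 1 - r := by
    have ha := Real.add_one_le_exp (κ / 10)
    have hb : r ≤ (1 + κ / 10)⁻¹ := by
      rw [hr, Real.exp_neg]
      apply inv_anti₀ (by linarith)
      linarith
    have hc : (1 + κ / 10)⁻¹ ≤ 1 - κ / 20 := by
      rw [inv_le_iff_one_le_mul₀ (by linarith)]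
      nlinarith
    linarith
  have hs15 : s ≤ Real.exp (-15) := by
    have h1 : κ ≤ Real.exp (-15) ^ 2 := by
      rw [← Real.exp_nat_mul]
      norm_num
      exact hκ30.le
    calc s = Real.sqrt κ := hs
    _ ≤ Real.sqrt (Real.exp (-15) ^ 2) := Real.sqrt_le_sqrt h1
    _ = Real.exp (-15) := by rw [Real.sqrt_sq (Real.exp_pos _).le]
  have hexp15 : Real.exp (-15) ≤ 1 / 7680 := by
    rw [Real.exp_neg, inv_le_comm₀ (Real.exp_pos _) (by norm_num)]
    have h2e : (2:ℝ) ≤ Real.exp 1 := by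
      have := Real.add_one_le_exp 1; linarith
    have : ((15:ℝ)) = ((15:ℕ):ℝ) * 1 := by norm_num
    rw [this, Real.exp_nat_mul]
    calc (1/7680 : ℝ)⁻¹ = 7680 := by norm_num
    _ ≤ 2 ^ 15 := by norm_num
    _ ≤ Real.exp 1 ^ 15 := pow_le_pow_left₀ (by norm_num) h2e 15
  have hCle : C ≤ κ / 20 := by
    have hKs8 : 1 / (4 * s) ≤ K * s / 8 := by
      have h2s : 2 / s ≤ K * s := by
        have : (2 / κ) * s = 2 / s := by rw [hκs]; field_simp
        calc 2 / s = (2 / κ) * s := this.symm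
        _ ≤ K * s := mul_le_mul_of_nonneg_right hK2 hs0.le
      calc 1 / (4 * s) = (2 / s) / 8 := by field_simp; ring
      _ ≤ K * s / 8 := by linarith
    have c1 : (1 / (4 * s)) ^ 3 / 6 ≤ Real.exp (1 / (4 * s)) := cube_le_exp (by positivity)
    have c3 : 20 / κ ≤ (1 / (4 * s)) ^ 3 / 6 := by
      have heq : (1 / (4 * s)) ^ 3 / 6 = 1 / (384 * s ^ 3) := by
        field_simp; ring
      rw [heq, hκs, div_le_div_iff₀ (by positivity) (by positivity)]
      have h7 : 7680 * s ≤ 1 := by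
        calc 7680 * s ≤ 7680 * (1 / 7680) := by
              apply mul_le_mul_of_nonneg_left (hs15.trans hexp15) (by norm_num)
        _ = 1 := by norm_num
      nlinarith [sq_nonneg s, pow_pos hs0 3]
    have e1 : 20 / κ ≤ Real.exp (K * s / 8) :=
      le_trans (c3.trans c1) (Real.exp_le_exp.mpr hKs8)
    have e2 : C = (Real.exp (K * s / 8))⁻¹ := by
      rw [hC, ← Real.exp_neg]; ring_nf
    rw [e2]
    calc (Real.exp (K * s / 8))⁻¹ ≤ (20 / κ)⁻¹ :=
          inv_anti₀ (by positivity) e1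
    _ = κ / 20 := by field_simp
  calc G κ x ≤ C / (1 - r) := hsum
  _ ≤ (κ / 20) / (κ / 20) := div_le_div₀ (by positivity) hCle (by positivity) h1r
  _ = 1 := by field_simp

/-- `16 ^ n ≤ 4 * n * centralBinom n ^ 2` for `n ≥ 1` -/
lemma sixteen_pow_le (n : ℕ) (hn : 1 ≤ n) :
    16 ^ n ≤ 4 * n * (Nat.centralBinom n) ^ 2 := by
  induction n with
  | zero => omega
  | succ n ih =>
    rcases Nat.eq_zero_or_pos n with h | h
    · subst h
      simp [Nat.centralBinom]
    · have hih := ih h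
      have hrec := Nat.succ_mul_centralBinom_succ n
      have hkey : (n + 1) ^ 2 * (4 * (n + 1) * Nat.centralBinom (n + 1) ^ 2)
          = 4 * (n + 1) * (2 * (2 * n + 1)) ^ 2 * Nat.centralBinom n ^ 2 := by
        calc (n + 1) ^ 2 * (4 * (n + 1) * Nat.centralBinom (n + 1) ^ 2)
            = 4 * (n + 1) * ((n + 1) * Nat.centralBinom (n + 1)) ^ 2 := by ring
        _ = 4 * (n + 1) * (2 * (2 * n + 1) * Nat.centralBinom n) ^ 2 := by rw [hrec]
        _ = 4 * (n + 1) * (2 * (2 * n + 1)) ^ 2 * Nat.centralBinom n ^ 2 := by ring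
      have h2 : (n + 1) ^ 2 * 16 ^ (n + 1) ≤ (n + 1) ^ 2 * (4 * (n + 1) * Nat.centralBinom (n + 1) ^ 2) := by
        rw [hkey]
        calc (n + 1) ^ 2 * 16 ^ (n + 1) = 16 * (n + 1) ^ 2 * 16 ^ n := by ring
        _ ≤ 16 * (n + 1) ^ 2 * (4 * n * Nat.centralBinom n ^ 2) := by
              exact Nat.mul_le_mul_left _ hih
        _ ≤ 4 * (n + 1) * (2 * (2 * n + 1)) ^ 2 * Nat.centralBinom n ^ 2 := by
              have : 16 * (n + 1) ^ 2 * (4 * n) ≤ 4 * (n + 1) * (2 * (2 * n + 1)) ^ 2 := by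
                nlinarith
              nlinarith [this, sq_nonneg (Nat.centralBinom n)]
      exact Nat.le_of_mul_le_mul_left h2 (by positivity)

/-- harmonic sum lower bound -/
lemma log_le_harmonic (N : ℕ) :
    Real.log (N + 1) ≤ ∑ j ∈ Finset.Icc 1 N, (1 / j : ℝ) := by
  induction N with
  | zero => simp
  | succ N ih =>
    rw [Finset.sum_Icc_succ_top (by omega)]
    have h1 : Real.log ((N:ℝ) + 1 + 1) - Real.log ((N:ℝ) + 1) ≤ 1 / ((N:ℝ) + 1) := by
      rw [← Real.log_div (by positivity) (by positivity)]
      have h2 : ((N:ℝ) + 1 + 1) / ((N:ℝ) + 1) - 1 = 1 / ((N:ℝ)+1) := by field_simp; ring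
      have := Real.log_le_sub_one_of_pos
        (show (0:ℝ) < ((N:ℝ) + 1 + 1) / ((N:ℝ) + 1) by positivity)
      linarith
    push_cast
    push_cast at ih
    linarith

lemma G_lower {κ : ℝ} (hκ : 0 < κ) (hκ' : Real.exp 30 < κ⁻¹) :
    Real.log κ⁻¹ / (2 * π) + 1 ≤ G κ (0, 0) := by
  have hκ30 : κ < Real.exp (-30) := by
    rw [← inv_inv κ, Real.exp_neg]
    exact inv_strictAnti₀ (Real.exp_pos _) hκ'
  have hexp30 : Real.exp (-30) < 1 := Real.exp_lt_one_iff.mpr (by norm_num)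
  have hκ1 : κ < 1 := by linarith
  have h4κ : (0:ℝ) < 4 + κ := by linarith
  -- very small κ
  have hκ120 : κ < 1 / 30 := by
    have h30exp : (30:ℝ) < Real.exp 30 := by
      have := Real.add_one_le_exp (30:ℝ); linarith
    have hinv : (Real.exp 30)⁻¹ < (30:ℝ)⁻¹ := inv_strictAnti₀ (by norm_num) h30exp
    rw [Real.exp_neg] at hκ30
    rw [show (1:ℝ)/30 = (30:ℝ)⁻¹ by norm_num]
    exact hκ30.trans hinv
  set N : ℕ := ⌊1 / (20 * κ)⌋₊ with hN
  have hNpos : (0:ℝ) < 1 / (20 * κ) := by positivity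
  have hN1 : 1 ≤ N := by
    rw [hN]
    apply Nat.le_floor
    rw [Nat.cast_one, le_div_iff₀ (by positivity)]
    linarith
  have hNle : (N : ℝ) ≤ 1 / (20 * κ) := Nat.floor_le hNpos.le
  have hNge : 1 / (20 * κ) ≤ (N : ℝ) + 1 := (Nat.lt_floor_add_one _).le
  -- W at even times
  have W2j : ∀ j : ℕ, W (2 * j) (0, 0) = Nat.centralBinom j ^ 2 := by
    intro j
    rw [W_eq]
    have h0 : ((0,0) : ℤ × ℤ).1 + ((0,0) : ℤ × ℤ).2 = 0 := rfl
    have h0' : ((0,0) : ℤ × ℤ).1 - ((0,0) : ℤ × ℤ).2 = 0 := rfl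
    rw [h0, h0', cnt_eq_choose (2 * j) j 0 (by push_cast; ring) (by omega)]
    rw [Nat.centralBinom]
    ring
  -- partial sum bound
  have hsub : ∑ j ∈ Finset.Icc 1 N, (1 / (4 + κ)) ^ (2 * j) * (W (2 * j) (0,0) : ℝ)
      ≤ G κ (0, 0) := by
    rw [G]
    have himg : ∑ j ∈ Finset.Icc 1 N, (1 / (4 + κ)) ^ (2 * j) * (W (2 * j) (0,0) : ℝ)
        = ∑ n ∈ (Finset.Icc 1 N).image (fun j => 2 * j),
            (1 / (4 + κ)) ^ n * (W n (0,0) : ℝ) := by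
      rw [Finset.sum_image (fun a _ b _ h => by omega)]
    rw [himg]
    exact Summable.sum_le_tsum _ (fun n _ => by positivity) (summable_term hκ _)
  -- per-term lower bound
  have hterm : ∀ j ∈ Finset.Icc 1 N,
      (39 / 40 : ℝ) * (1 / (4 * j)) ≤ (1 / (4 + κ)) ^ (2 * j) * (W (2 * j) (0,0) : ℝ) := by
    intro j hj
    rw [Finset.mem_Icc] at hj
    obtain ⟨hj1, hjN⟩ := hj
    have hj0 : (0:ℝ) < (j:ℝ) := by exact_mod_cast hj1
    have hcb : (16:ℝ) ^ j / (4 * j) ≤ (Nat.centralBinom j : ℝ) ^ 2 := by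
      rw [div_le_iff₀ (by positivity)]
      have := sixteen_pow_le j hj1
      have hc : (16:ℝ) ^ j ≤ 4 * j * (Nat.centralBinom j : ℝ) ^ 2 := by exact_mod_cast this
      linarith [hc]
    have hpow : (1 / (4 + κ)) ^ (2 * j) * (16:ℝ) ^ j = (4 / (4 + κ)) ^ (2 * j) := by
      rw [show (16:ℝ) = 4 ^ 2 by norm_num, ← pow_mul, ← mul_pow]
      congr 1
      ring
    have hW : (W (2 * j) (0,0) : ℝ) = (Nat.centralBinom j : ℝ) ^ 2 := by
      rw [W2j]; push_cast; ring
    have hexpk : Real.exp (-(κ / 4)) ≤ 4 / (4 + κ) := by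
      have ha : 1 + κ / 4 ≤ Real.exp (κ / 4) := by
        have := Real.add_one_le_exp (κ / 4); linarith
      have hb : (Real.exp (κ / 4))⁻¹ ≤ (1 + κ / 4)⁻¹ := inv_anti₀ (by positivity) ha
      have hc : (1 + κ / 4)⁻¹ = 4 / (4 + κ) := by
        rw [inv_eq_one_div, div_eq_div_iff (by positivity) h4κ.ne']
        ring
      rw [Real.exp_neg]
      rw [hc] at hb
      exact hb
    have hgeom : (39 / 40 : ℝ) ≤ (4 / (4 + κ)) ^ (2 * j) := by
      calc (39 / 40 : ℝ) ≤ Real.exp (-(1 / 40)) := by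
            have := Real.add_one_le_exp (-(1/40 : ℝ)); linarith
      _ ≤ Real.exp (-(κ / 4)) ^ (2 * j) := by
            rw [← Real.exp_nat_mul]
            apply Real.exp_le_exp.mpr
            have hjN' : (j : ℝ) ≤ (N : ℝ) := by exact_mod_cast hjN
            have : ((2 * j : ℕ) : ℝ) = 2 * (j : ℝ) := by push_cast; ring
            rw [this]
            have hNκ : (N : ℝ) * κ ≤ 1 / 20 := by
              rw [← le_div_iff₀ hκ]
              calc (N:ℝ) ≤ 1 / (20 * κ) := hNle
              _ = 1 / 20 / κ := by ring
            have hjκ : (j : ℝ) * κ ≤ 1 / 20 :=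
              le_trans (mul_le_mul_of_nonneg_right hjN' hκ.le) hNκ
            nlinarith
      _ ≤ (4 / (4 + κ)) ^ (2 * j) :=
            pow_le_pow_left₀ (Real.exp_pos _).le hexpk _
    calc (39 / 40 : ℝ) * (1 / (4 * j))
        ≤ (4 / (4 + κ)) ^ (2 * j) * (1 / (4 * j)) :=
          mul_le_mul_of_nonneg_right hgeom (by positivity)
    _ = (1 / (4 + κ)) ^ (2 * j) * ((16:ℝ) ^ j / (4 * j)) := by
          rw [← hpow]; ring
    _ ≤ (1 / (4 + κ)) ^ (2 * j) * (W (2 * j) (0,0) : ℝ) := by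
          rw [hW]
          exact mul_le_mul_of_nonneg_left hcb (by positivity)
  -- harmonic comparison
  have hharm : (39 / 160 : ℝ) * Real.log (N + 1)
      ≤ ∑ j ∈ Finset.Icc 1 N, (39 / 40 : ℝ) * (1 / (4 * j)) := by
    have h1 : ∑ j ∈ Finset.Icc 1 N, (39 / 40 : ℝ) * (1 / (4 * j))
        = (39 / 160) * ∑ j ∈ Finset.Icc 1 N, (1 / j : ℝ) := by
      rw [Finset.mul_sum]
      apply Finset.sum_congr rfl
      intro j hj
      rw [Finset.mem_Icc] at hj
      have hj0 : (0:ℝ) < (j:ℝ) := by exact_mod_cast hj.1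
      field_simp
      ring
    rw [h1]
    apply mul_le_mul_of_nonneg_left (log_le_harmonic N) (by norm_num)
  -- log bounds
  have hL : 30 < Real.log κ⁻¹ := by
    have := Real.log_lt_log (Real.exp_pos 30) hκ'
    rwa [Real.log_exp] at this
  have hlog20 : Real.log 20 ≤ 3 := by
    rw [Real.log_le_iff_le_exp (by norm_num)]
    have h2718 : (2.7182818283 : ℝ) < Real.exp 1 := Real.exp_one_gt_d9
    have h3 : ((3:ℝ)) = ((3:ℕ):ℝ) * 1 := by norm_num
    rw [h3, Real.exp_nat_mul]
    calc (20:ℝ) ≤ 2.7182818283 ^ 3 := by norm_num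
    _ ≤ Real.exp 1 ^ 3 := pow_le_pow_left₀ (by norm_num) h2718.le 3
  have hlogN : Real.log κ⁻¹ - 3 ≤ Real.log ((N:ℝ) + 1) := by
    have h1 : Real.log (1 / (20 * κ)) ≤ Real.log ((N:ℝ) + 1) :=
      Real.log_le_log hNpos hNge
    have h2 : Real.log (1 / (20 * κ)) = Real.log κ⁻¹ - Real.log 20 := by
      rw [one_div, mul_inv, Real.log_mul (by positivity) (by positivity),
        Real.log_inv 20]
      ring
    linarith
  -- final numerics
  have hπ : (3.14 : ℝ) < π := by
    have := Real.pi_gt_d6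
    linarith
  have hLpos : (0:ℝ) < Real.log κ⁻¹ := by linarith
  have hdiv : Real.log κ⁻¹ / (2 * π) ≤ Real.log κ⁻¹ / 6.28 := by
    apply div_le_div_of_nonneg_left hLpos.le (by norm_num)
    linarith
  have final : Real.log κ⁻¹ / 6.28 + 1 ≤ (39 / 160 : ℝ) * (Real.log κ⁻¹ - 3) := by
    rw [div_add' _ _ _ (by norm_num), div_le_iff₀ (by norm_num)]
    nlinarith
  have hmono : (39 / 160 : ℝ) * (Real.log κ⁻¹ - 3) ≤ (39 / 160 : ℝ) * Real.log (N + 1) := by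
    apply mul_le_mul_of_nonneg_left _ (by norm_num)
    push_cast
    linarith [hlogN]
  have hchain := le_trans (le_trans hmono hharm) (le_trans (Finset.sum_le_sum hterm) hsub)
  linarith

/-- Proposition 4.1, eq. (4.5): for `κ⁻¹ > e^{30}`, `0 < ε < 1`, `m ≥ 2`,
`u* = log m / log G^{o,o}` and every `|x| ≥ 2κ⁻¹`,
`((G^{o,o})² − (G^{o,x})²)^{−(1−ε)u*} ≤ m^{−(1−ε)} ((log κ⁻¹)/(2π))^{−(1−ε)u*}`. -/
theorem stmt15 (κ : ℝ) (hκ : 0 < κ) (hκ' : Real.exp 30 < κ⁻¹)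
    (ε : ℝ) (hε : 0 < ε) (hε' : ε < 1) (m : ℝ) (hm : 2 ≤ m)
    (x : ℤ × ℤ) (hx : 2 * κ⁻¹ ≤ (gnorm x : ℝ)) :
    ((G κ (0, 0)) ^ 2 - (G κ x) ^ 2)
        ^ (-(1 - ε) * (Real.log m / Real.log (G κ (0, 0))))
      ≤ m ^ (-(1 - ε)) *
        (Real.log κ⁻¹ / (2 * π))
          ^ (-(1 - ε) * (Real.log m / Real.log (G κ (0, 0)))) := by
  set Go : ℝ := G κ (0, 0) with hGo
  set Gx : ℝ := G κ x with hGx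
  set L : ℝ := Real.log κ⁻¹ with hL
  have hL30 : 30 < L := by
    rw [hL]
    have := Real.log_lt_log (Real.exp_pos 30) hκ'
    rwa [Real.log_exp] at this
  have hπ : (3.14 : ℝ) < π := by
    have := Real.pi_gt_d6; linarith
  have hπ7 : π < 3.15 := by
    have := Real.pi_lt_d2; linarith
  have hLπ : (1:ℝ) < L / (2 * π) := by
    rw [lt_div_iff₀ (by linarith)]
    linarith
  have hGoL : L / (2 * π) + 1 ≤ Go := G_lower hκ hκ'
  have hGo1 : (2:ℝ) < Go := by linarith
  have hGx0 : 0 ≤ Gx := G_nonneg hκ x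
  have hGx1 : Gx ≤ 1 := Gx_le_one hκ hκ' x hx
  set c : ℝ := -(1 - ε) * (Real.log m / Real.log Go) with hc
  have hlogGo : 0 < Real.log Go := Real.log_pos (by linarith)
  have hlogm : 0 < Real.log m := Real.log_pos (by linarith)
  have hc0 : c ≤ 0 := by
    rw [hc]
    apply mul_nonpos_of_nonpos_of_nonneg (by linarith)
    positivity
  -- key inequality : Go * (L / (2π)) ≤ Go² − Gx²
  have hA0 : (0:ℝ) < Go * (L / (2 * π)) := by
    apply mul_pos (by linarith)
    linarith
  have hkey : Go * (L / (2 * π)) ≤ Go ^ 2 - Gx ^ 2 := by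
    have h1 : Gx ^ 2 ≤ 1 := by nlinarith
    have h2 : Go * (L / (2 * π)) + 1 ≤ Go ^ 2 := by
      calc Go * (L / (2 * π)) + 1 ≤ Go * (L / (2 * π)) + Go * 1 - 1 := by nlinarith
      _ = Go * (L / (2 * π) + 1) - 1 := by ring
      _ ≤ Go * Go - 1 := by nlinarith
      _ ≤ Go ^ 2 := by nlinarith
    linarith
  -- m ^ (-(1-ε)) = Go ^ c
  have hmc : m ^ (-(1 - ε)) = Go ^ c := by
    rw [Real.rpow_def_of_pos (by linarith : (0:ℝ) < m),
      Real.rpow_def_of_pos (by linarith : (0:ℝ) < Go)]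
    congr 1
    rw [hc]
    field_simp
  have hrhs : m ^ (-(1 - ε)) * (L / (2 * π)) ^ c = (Go * (L / (2 * π))) ^ c := by
    rw [hmc, ← Real.mul_rpow (by linarith) (by linarith)]
  rw [hrhs]
  exact Real.rpow_le_rpow_of_nonpos hA0 hkey hc0
end
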